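/- arXiv:1707.04306 — 4 statements merged into one kernel-verified Lean document; each statement's English description precedes it below -/
import Mathlib

section
/- Let S be a real symmetric p×p matrix and define g(θ) = −log det θ + Tr(θS) on positive definite θ, with gradient ∇g(θ) = S − θ⁻¹. For constants 0 < b < B < ∞ and all θ, ϑ ∈ M_p^+(b,B), the two-sided bound holds: g(θ) + ⟨∇g(θ), ϑ−θ⟩ + (1/(2B²))‖ϑ−θ‖_F² ≤ g(ϑ) ≤ g(θ) + ⟨∇g(θ), ϑ−θ⟩ + (1/(2b²))‖ϑ−θ‖_F². -/
open Matrix Finset MeasureTheory ProbabilityTheory Filter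

noncomputable section

/-- Frobenius norm of a real matrix. -/
def frob {p : ℕ} (M : Matrix (Fin p) (Fin p) ℝ) : ℝ := Real.sqrt (∑ i, ∑ j, (M i j)^2)

/-- Entrywise ℓ¹ norm. -/
def l1m {p : ℕ} (M : Matrix (Fin p) (Fin p) ℝ) : ℝ := ∑ i, ∑ j, |M i j|

/-- Entrywise sup norm. -/
def linf {p : ℕ} (M : Matrix (Fin p) (Fin p) ℝ) : ℝ := ⨆ i, ⨆ j, |M i j|

/-- Elastic-net penalty. -/
def wp {p : ℕ} (α : ℝ) (M : Matrix (Fin p) (Fin p) ℝ) : ℝ :=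
  α * l1m M + (1 - α)/2 * (frob M)^2

/-- Smallest eigenvalue. -/
def lamMin {p : ℕ} (M : Matrix (Fin p) (Fin p) ℝ) : ℝ :=
  sInf {r : ℝ | Module.End.HasEigenvalue (Matrix.toLin' M) r}

/-- Largest eigenvalue. -/
def lamMax {p : ℕ} (M : Matrix (Fin p) (Fin p) ℝ) : ℝ :=
  sSup {r : ℝ | Module.End.HasEigenvalue (Matrix.toLin' M) r}

/-- Euclidean norm of a vector. -/
def vnorm {p : ℕ} (v : Fin p → ℝ) : ℝ := Real.sqrt (∑ i, (v i)^2)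

/-- Spectral (operator) norm. -/
def specNorm {p : ℕ} (M : Matrix (Fin p) (Fin p) ℝ) : ℝ :=
  sSup {r : ℝ | ∃ v : Fin p → ℝ, vnorm v = 1 ∧ r = vnorm (M.mulVec v)}

/-- `M ∈ M_p^+(a, A)`. -/
def Mpp {p : ℕ} (a A : ℝ) (M : Matrix (Fin p) (Fin p) ℝ) : Prop :=
  M.PosDef ∧ a ≤ lamMin M ∧ lamMax M ≤ A

/-- Elastic-net proximal map, entrywise. -/
def proxMat {p : ℕ} (α γ : ℝ) (M : Matrix (Fin p) (Fin p) ℝ) :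
    Matrix (Fin p) (Fin p) ℝ :=
  Matrix.of fun i j =>
    if |M i j| < α * γ then 0
    else if α * γ ≤ M i j then (M i j - α*γ)/(1+(1-α)*γ)
    else (M i j + α*γ)/(1+(1-α)*γ)

/-- Pre/post change sample covariance matrices `S₁(τ)` (j = 0) and `S₂(τ)` (j = 1). -/
def Smat {p : ℕ} (X : ℕ → Fin p → ℝ) (T : ℕ) (j : Fin 2) (τ : ℕ) :
    Matrix (Fin p) (Fin p) ℝ :=
  if j = 0 then ((τ : ℝ))⁻¹ • ∑ t ∈ Finset.Icc 1 τ, vecMulVec (X t) (X t)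
  else ((T : ℝ) - (τ : ℝ))⁻¹ • ∑ t ∈ Finset.Icc (τ+1) T, vecMulVec (X t) (X t)

/-- The functions `g_{1,τ}` (j = 0) and `g_{2,τ}` (j = 1). -/
def gfun {p : ℕ} (X : ℕ → Fin p → ℝ) (T : ℕ) (j : Fin 2) (τ : ℕ)
    (θ : Matrix (Fin p) (Fin p) ℝ) : ℝ :=
  (if j = 0 then (τ : ℝ)/(2*T) else ((T : ℝ)-(τ : ℝ))/(2*T)) *
    (-Real.log θ.det + (θ * Smat X T j τ).trace)

/-- The surrogate function `H(τ | θ₁, θ₂)`. -/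
def Hfun {p : ℕ} (X : ℕ → Fin p → ℝ) (T : ℕ) (lam : Fin 2 → ℕ → ℝ) (α : ℝ) (τ : ℕ)
    (θ1 θ2 : Matrix (Fin p) (Fin p) ℝ) : ℝ :=
  gfun X T 0 τ θ1 + lam 0 τ * wp α θ1 + gfun X T 1 τ θ2 + lam 1 τ * wp α θ2

/-- `μ_j = max_{τ ∈ T} [½‖S_j(τ)‖₂ + αpλ_{j,τ}]`. -/
def muC {p : ℕ} (X : ℕ → Fin p → ℝ) (T n₀ : ℕ) (lam : Fin 2 → ℕ → ℝ) (α : ℝ)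
    (j : Fin 2) : ℝ :=
  sSup ((fun τ : ℕ => (1/2) * specNorm (Smat X T j τ) + α * (p : ℝ) * lam j τ) ''
    ↑(Finset.Icc n₀ (T - n₀)))

/-- `λ̄_j = max_{τ ∈ T} λ_{j,τ}`. -/
def lamBar (lam : Fin 2 → ℕ → ℝ) (n₀ T : ℕ) (j : Fin 2) : ℝ :=
  sSup (lam j '' ↑(Finset.Icc n₀ (T - n₀)))

/-- `λ̲_j = min_{τ ∈ T} λ_{j,τ}`. -/
def lamUnd (lam : Fin 2 → ℕ → ℝ) (n₀ T : ℕ) (j : Fin 2) : ℝ :=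
  sInf (lam j '' ↑(Finset.Icc n₀ (T - n₀)))

/-- The constant `b_j`. -/
def bC {p : ℕ} (X : ℕ → Fin p → ℝ) (T n₀ : ℕ) (lam : Fin 2 → ℕ → ℝ) (α : ℝ)
    (j : Fin 2) : ℝ :=
  (-(muC X T n₀ lam α j) +
      Real.sqrt ((muC X T n₀ lam α j)^2 + 2*(lamBar lam n₀ T j)*(1-α)*((n₀ : ℝ)/(T : ℝ))))
    / (2*(1-α)*(lamBar lam n₀ T j))

/-- The constant `B_j`. -/
def BC {p : ℕ} (X : ℕ → Fin p → ℝ) (T n₀ : ℕ) (lam : Fin 2 → ℕ → ℝ) (α : ℝ)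
    (j : Fin 2) : ℝ :=
  ((muC X T n₀ lam α j) +
      Real.sqrt ((muC X T n₀ lam α j)^2 + 2*(lamUnd lam n₀ T j)*(1-α)))
    / (2*(1-α)*(lamUnd lam n₀ T j))

/-- `N(0, S)` law on `ℝ^p`: pushforward of a standard Gaussian by any `A` with `AAᵀ = S`. -/
def IsGaussianLaw {p : ℕ} (μ : Measure (Fin p → ℝ)) (S : Matrix (Fin p) (Fin p) ℝ) : Prop :=
  ∃ A : Matrix (Fin p) (Fin p) ℝ, A * Aᵀ = S ∧
    μ = Measure.map A.mulVec (Measure.pi fun _ : Fin p => gaussianReal 0 1)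

/-- Restricted largest eigenvalue over unit vectors with at most 2 nonzero coordinates. -/
def kupp {p : ℕ} (S : Matrix (Fin p) (Fin p) ℝ) : ℝ :=
  sSup {r : ℝ | ∃ u : Fin p → ℝ, vnorm u = 1 ∧ (Function.support u).ncard ≤ 2 ∧
    r = u ⬝ᵥ S.mulVec u}

/-- Restricted smallest eigenvalue over unit vectors with at most 2 nonzero coordinates. -/
def klow {p : ℕ} (S : Matrix (Fin p) (Fin p) ℝ) : ℝ :=
  sInf {r : ℝ | ∃ u : Fin p → ℝ, vnorm u = 1 ∧ (Function.support u).ncard ≤ 2 ∧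
    r = u ⬝ᵥ S.mulVec u}

/-- Number of nonzero entries of a matrix. -/
def nnz {p : ℕ} (M : Matrix (Fin p) (Fin p) ℝ) : ℕ :=
  (Function.support (fun ij : Fin p × Fin p => M ij.1 ij.2)).ncard

/-- `g(θ) = -log det θ + Tr(θ S)`. -/
def gdet {p : ℕ} (S θ : Matrix (Fin p) (Fin p) ℝ) : ℝ :=
  -Real.log θ.det + (θ * S).trace

/-- The regularization parameters of equation (3.2). -/
def lamForm (p T : ℕ) (κbar α : ℝ) : Fin 2 → ℕ → ℝ := fun j τ =>
  if j = 0 then κbar/(α*(T : ℝ)) * Real.sqrt (48*(τ : ℝ)*Real.log ((p : ℝ)*(T : ℝ)))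
  else κbar/(α*(T : ℝ)) * Real.sqrt (48*((T : ℝ)-(τ : ℝ))*Real.log ((p : ℝ)*(T : ℝ)))



namespace LogDetAux

variable {p : ℕ}

lemma mono_aux {f g h : ℝ → ℝ}
    (hf : ∀ t ∈ Set.Icc (0:ℝ) 1, HasDerivAt f (g t) t)
    (hg : ∀ t ∈ Set.Icc (0:ℝ) 1, HasDerivAt g (h t) t)
    (hh : ∀ t ∈ Set.Icc (0:ℝ) 1, 0 ≤ h t)
    (hg0 : g 0 = 0) : f 0 ≤ f 1 := by
  have hI : Convex ℝ (Set.Icc (0:ℝ) 1) := convex_Icc 0 1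
  have hint : interior (Set.Icc (0:ℝ) 1) ⊆ Set.Icc 0 1 := interior_subset
  have hgmono : MonotoneOn g (Set.Icc (0:ℝ) 1) := by
    apply monotoneOn_of_deriv_nonneg hI
    · exact fun t ht => (hg t ht).continuousAt.continuousWithinAt
    · exact fun t ht => ((hg t (hint ht)).differentiableAt).differentiableWithinAt
    · intro t ht
      rw [(hg t (hint ht)).deriv]
      exact hh t (hint ht)
  have hgnn : ∀ t ∈ Set.Icc (0:ℝ) 1, 0 ≤ g t := by
    intro t ht
    rw [← hg0]
    exact hgmono (Set.left_mem_Icc.2 zero_le_one) ht ht.1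
  have hfmono : MonotoneOn f (Set.Icc (0:ℝ) 1) := by
    apply monotoneOn_of_deriv_nonneg hI
    · exact fun t ht => (hf t ht).continuousAt.continuousWithinAt
    · exact fun t ht => ((hf t (hint ht)).differentiableAt).differentiableWithinAt
    · intro t ht
      rw [(hf t (hint ht)).deriv]
      exact hgnn t (hint ht)
  exact hfmono (Set.left_mem_Icc.2 zero_le_one) (Set.right_mem_Icc.2 zero_le_one) zero_le_one

lemma haspos {q : ℕ} (x : Fin q → ℝ) (hx : ∀ i, 0 < 1 + x i) {t : ℝ}
    (ht : t ∈ Set.Icc (0:ℝ) 1) (i : Fin q) : 0 < 1 + t * x i := by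
  have h1 := hx i
  rcases ht with ⟨h0, h2⟩
  rcases h0.eq_or_lt with h|h
  · simp [← h]
  · nlinarith [mul_pos h h1]

lemma derivPhi {q : ℕ} (x : Fin q → ℝ) (hx : ∀ i, 0 < 1 + x i) {t : ℝ}
    (ht : t ∈ Set.Icc (0:ℝ) 1) :
    HasDerivAt (fun s => ∑ i, (s * x i - Real.log (1 + s * x i)))
      (∑ i, (x i - x i / (1 + t * x i))) t := by
  apply HasDerivAt.fun_sum
  intro i _
  have hu : HasDerivAt (fun s : ℝ => 1 + s * x i) (x i) t :=
    (hasDerivAt_mul_const (x i)).const_add 1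
  exact (hasDerivAt_mul_const (x i)).sub (hu.log (ne_of_gt (haspos x hx ht i)))

lemma derivPhi' {q : ℕ} (x : Fin q → ℝ) (hx : ∀ i, 0 < 1 + x i) {t : ℝ}
    (ht : t ∈ Set.Icc (0:ℝ) 1) :
    HasDerivAt (fun s => ∑ i, (x i - x i / (1 + s * x i)))
      (∑ i, (x i)^2 / (1 + t * x i)^2) t := by
  apply HasDerivAt.fun_sum
  intro i _
  have hu : HasDerivAt (fun s : ℝ => 1 + s * x i) (x i) t :=
    (hasDerivAt_mul_const (x i)).const_add 1
  have hne := ne_of_gt (haspos x hx ht i)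
  have hd := ((hasDerivAt_const t (x i)).div hu hne).const_sub (x i)
  exact hd.congr_deriv (by ring)

lemma scalar_lower {q : ℕ} (x : Fin q → ℝ) (hx : ∀ i, 0 < 1 + x i) (c : ℝ)
    (hm : ∀ t ∈ Set.Icc (0:ℝ) 1, c ≤ ∑ i, (x i)^2 / (1 + t * x i)^2) :
    c/2 ≤ ∑ i, (x i - Real.log (1 + x i)) := by
  have key : (fun t : ℝ => (∑ i, (t * x i - Real.log (1 + t * x i))) - c * t^2/2) 0 ≤
      (fun t : ℝ => (∑ i, (t * x i - Real.log (1 + t * x i))) - c * t^2/2) 1 := by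
    apply mono_aux (f := fun t : ℝ => (∑ i, (t * x i - Real.log (1 + t * x i))) - c * t^2/2)
      (g := fun t => (∑ i, (x i - x i / (1 + t * x i))) - c * t)
      (h := fun t => (∑ i, (x i)^2 / (1 + t * x i)^2) - c)
    · intro t ht
      have h1 : HasDerivAt (fun s : ℝ => c * s^2/2) (c * t) t := by
        have := ((hasDerivAt_pow 2 t).const_mul c).div_const 2
        exact this.congr_deriv (by norm_num; ring)
      exact (derivPhi x hx ht).sub h1
    · intro t ht
      have h1 : HasDerivAt (fun s : ℝ => c * s) c t := by
        simpa using (hasDerivAt_id t).const_mul c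
      exact (derivPhi' x hx ht).sub h1
    · intro t ht
      simpa using hm t ht
    · simp
  simp only [zero_mul, Real.log_one, mul_zero, one_mul, one_pow, mul_one] at key
  simp only [zero_pow, sub_zero, zero_sub, mul_zero] at key
  norm_num at key
  rw [Finset.sum_sub_distrib]
  linarith [key]

lemma scalar_upper {q : ℕ} (x : Fin q → ℝ) (hx : ∀ i, 0 < 1 + x i) (c : ℝ)
    (hm : ∀ t ∈ Set.Icc (0:ℝ) 1, ∑ i, (x i)^2 / (1 + t * x i)^2 ≤ c) :
    ∑ i, (x i - Real.log (1 + x i)) ≤ c/2 := by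
  have key : (fun t : ℝ => c * t^2/2 - ∑ i, (t * x i - Real.log (1 + t * x i))) 0 ≤
      (fun t : ℝ => c * t^2/2 - ∑ i, (t * x i - Real.log (1 + t * x i))) 1 := by
    apply mono_aux (f := fun t : ℝ => c * t^2/2 - ∑ i, (t * x i - Real.log (1 + t * x i)))
      (g := fun t => c * t - ∑ i, (x i - x i / (1 + t * x i)))
      (h := fun t => c - ∑ i, (x i)^2 / (1 + t * x i)^2)
    · intro t ht
      have h1 : HasDerivAt (fun s : ℝ => c * s^2/2) (c * t) t := by
        have := ((hasDerivAt_pow 2 t).const_mul c).div_const 2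
        exact this.congr_deriv (by norm_num; ring)
      exact h1.sub (derivPhi x hx ht)
    · intro t ht
      have h1 : HasDerivAt (fun s : ℝ => c * s) c t := by
        simpa using (hasDerivAt_id t).const_mul c
      exact h1.sub (derivPhi' x hx ht)
    · intro t ht
      simpa using hm t ht
    · simp
  simp only [zero_mul, Real.log_one, mul_zero, one_mul, one_pow, mul_one] at key
  simp only [zero_pow, sub_zero, zero_sub, mul_zero] at key
  norm_num at key
  rw [Finset.sum_sub_distrib]
  linarith [key]

-- master conjugation lemma
lemma conj_poly {A : Matrix (Fin p) (Fin p) ℝ} (hA : A.IsHermitian) (a c : ℝ) :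
    a • (1 : Matrix (Fin p) (Fin p) ℝ) + c • A =
      (hA.eigenvectorUnitary : Matrix (Fin p) (Fin p) ℝ) *
      diagonal (fun i => a + c * hA.eigenvalues i) *
      star (hA.eigenvectorUnitary : Matrix (Fin p) (Fin p) ℝ) := by
  set U := (hA.eigenvectorUnitary : Matrix (Fin p) (Fin p) ℝ)
  have hUU : U * star U = 1 := (Matrix.mem_unitaryGroup_iff).mp hA.eigenvectorUnitary.2
  have hspec : A = U * diagonal (hA.eigenvalues) * star U := by
    have := hA.spectral_theorem
    simpa [Function.comp] using this
  have hdiag : diagonal (fun i => a + c * hA.eigenvalues i) =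
      a • (1 : Matrix (Fin p) (Fin p) ℝ) + c • diagonal hA.eigenvalues := by
    rw [smul_one_eq_diagonal, ← diagonal_smul, ← diagonal_add]
    rfl
  rw [hdiag, Matrix.mul_add, Matrix.add_mul]
  congr 1
  · rw [mul_smul_comm, smul_mul_assoc, Matrix.mul_one, hUU]
  · rw [mul_smul_comm, smul_mul_assoc, ← hspec]

lemma det_conj' {U M : Matrix (Fin p) (Fin p) ℝ} (hUU : U * star U = 1) :
    det (U * M * star U) = det M := by
  have h1 : det U * det (star U) = 1 := by rw [← det_mul, hUU, det_one]
  rw [det_mul, det_mul]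
  linear_combination M.det * h1

lemma trace_conj' {U M : Matrix (Fin p) (Fin p) ℝ} (hUU : star U * U = 1) :
    trace (U * M * star U) = trace M := by
  rw [trace_mul_comm, ← Matrix.mul_assoc, hUU, Matrix.one_mul]

lemma inv_conj' {U : Matrix (Fin p) (Fin p) ℝ} (hUU : U * star U = 1)
    (hsUU : star U * U = 1) {w : Fin p → ℝ} (hw : ∀ i, w i ≠ 0) :
    (U * diagonal w * star U)⁻¹ = U * diagonal (fun i => (w i)⁻¹) * star U := by
  apply Matrix.inv_eq_right_inv
  calc U * diagonal w * star U * (U * diagonal (fun i => (w i)⁻¹) * star U)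
      = U * (diagonal w * (star U * U) * diagonal (fun i => (w i)⁻¹)) * star U := by
        simp only [Matrix.mul_assoc]
    _ = U * (diagonal w * diagonal (fun i => (w i)⁻¹)) * star U := by rw [hsUU, Matrix.mul_one]
    _ = 1 := by
        rw [diagonal_mul_diagonal]
        have : (fun i => w i * (w i)⁻¹) = fun _ => (1:ℝ) := by
          funext i; exact mul_inv_cancel₀ (hw i)
        rw [this, diagonal_one, Matrix.mul_one, hUU]

lemma psd_conj' {U : Matrix (Fin p) (Fin p) ℝ} {w : Fin p → ℝ} (hw : ∀ i, 0 ≤ w i) :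
    (U * diagonal w * star U).PosSemidef := by
  have := (PosSemidef.diagonal (fun i => hw i : 0 ≤ w)).mul_mul_conjTranspose_same U
  simpa [Matrix.star_eq_conjTranspose, Matrix.mul_assoc] using this

lemma hasEig_eigenvalues {A : Matrix (Fin p) (Fin p) ℝ} (hA : A.IsHermitian) (i : Fin p) :
    Module.End.HasEigenvalue (Matrix.toLin' A) (hA.eigenvalues i) := by
  apply Module.End.hasEigenvalue_of_hasEigenvector (x := ⇑(hA.eigenvectorBasis i))
  constructor
  · rw [Module.End.mem_eigenspace_iff, Matrix.toLin'_apply]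
    exact hA.mulVec_eigenvectorBasis i
  · intro h
    have := hA.eigenvectorBasis.orthonormal.ne_zero i
    apply this
    ext j
    exact congrFun h j

lemma eig_mem_range {A : Matrix (Fin p) (Fin p) ℝ} (hA : A.IsHermitian) {μ : ℝ}
    (hμ : Module.End.HasEigenvalue (Matrix.toLin' A) μ) :
    μ ∈ Set.range hA.eigenvalues := by
  by_contra hc
  have hne : ∀ i, hA.eigenvalues i - μ ≠ 0 := by
    intro i h
    exact hc ⟨i, by linarith [sub_eq_zero.mp h]⟩
  -- A - μ • 1 is invertible
  have hconj : A - μ • 1 = (hA.eigenvectorUnitary : Matrix (Fin p) (Fin p) ℝ) *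
      diagonal (fun i => hA.eigenvalues i - μ) *
      star (hA.eigenvectorUnitary : Matrix (Fin p) (Fin p) ℝ) := by
    have := conj_poly hA (-μ) 1
    simp only [neg_smul, one_smul] at this
    have h2 : (fun i => -μ + 1 * hA.eigenvalues i) = fun i => hA.eigenvalues i - μ := by
      funext i; ring
    rw [h2] at this
    rw [← this]
    abel
  have hdet : det (A - μ • 1) ≠ 0 := by
    rw [hconj, det_conj' ((Matrix.mem_unitaryGroup_iff).mp hA.eigenvectorUnitary.2),
      det_diagonal]
    exact Finset.prod_ne_zero_iff.mpr (fun i _ => hne i)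
  obtain ⟨v, hv⟩ := hμ.exists_hasEigenvector
  have hv0 : (A - μ • 1) *ᵥ v = 0 := by
    have h1 : A *ᵥ v = μ • v := by
      rw [← Matrix.toLin'_apply]
      exact hv.apply_eq_smul
    rw [Matrix.sub_mulVec, h1, Matrix.smul_mulVec, Matrix.one_mulVec, sub_self]
  have : v = 0 := by
    have h2 := congrArg (fun w => (A - μ • 1)⁻¹ *ᵥ w) hv0
    simpa [Matrix.mulVec_mulVec, Matrix.nonsing_inv_mul _ (isUnit_iff_ne_zero.mpr hdet),
      Matrix.one_mulVec] using h2
  exact hv.2 this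

lemma eig_ge_of_psd {A : Matrix (Fin p) (Fin p) ℝ} (hA : A.IsHermitian) {c : ℝ}
    (h : (A - c • 1).PosSemidef) (i : Fin p) : c ≤ hA.eigenvalues i := by
  set v := ⇑(hA.eigenvectorBasis i) with hvdef
  have hv : A *ᵥ v = hA.eigenvalues i • v := hA.mulVec_eigenvectorBasis i
  have hv0 : v ≠ 0 := by
    intro hz
    apply hA.eigenvectorBasis.orthonormal.ne_zero i
    ext j
    exact congrFun hz j
  have hq : 0 < dotProduct v v := by
    have := dotProduct_self_star_pos_iff (v := v)
    simpa using this.mpr hv0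
  have h2 := h.dotProduct_mulVec_nonneg v
  rw [Matrix.sub_mulVec, hv, Matrix.smul_mulVec, Matrix.one_mulVec] at h2
  simp only [star_trivial, dotProduct_sub, dotProduct_smul, smul_eq_mul] at h2
  nlinarith

lemma eig_le_of_psd {A : Matrix (Fin p) (Fin p) ℝ} (hA : A.IsHermitian) {c : ℝ}
    (h : (c • 1 - A).PosSemidef) (i : Fin p) : hA.eigenvalues i ≤ c := by
  set v := ⇑(hA.eigenvectorBasis i) with hvdef
  have hv : A *ᵥ v = hA.eigenvalues i • v := hA.mulVec_eigenvectorBasis i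
  have hv0 : v ≠ 0 := by
    intro hz
    apply hA.eigenvectorBasis.orthonormal.ne_zero i
    ext j
    exact congrFun hz j
  have hq : 0 < dotProduct v v := by
    have := dotProduct_self_star_pos_iff (v := v)
    simpa using this.mpr hv0
  have h2 := h.dotProduct_mulVec_nonneg v
  rw [Matrix.sub_mulVec, hv, Matrix.smul_mulVec, Matrix.one_mulVec] at h2
  simp only [star_trivial, dotProduct_sub, dotProduct_smul, smul_eq_mul] at h2
  nlinarith

lemma psd_smul {M : Matrix (Fin p) (Fin p) ℝ} (hM : M.PosSemidef) {c : ℝ} (hc : 0 ≤ c) :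
    (c • M).PosSemidef := by
  refine posSemidef_iff_dotProduct_mulVec.mpr ⟨?_, ?_⟩
  · unfold Matrix.IsHermitian
    rw [Matrix.conjTranspose_smul, hM.1]
    simp
  · intro x
    rw [Matrix.smul_mulVec]
    simp only [star_trivial, dotProduct_smul, smul_eq_mul]
    exact mul_nonneg hc (hM.dotProduct_mulVec_nonneg x)

lemma eigSpec {A : Matrix (Fin p) (Fin p) ℝ} (hA : A.IsHermitian) :
    A = (hA.eigenvectorUnitary : Matrix (Fin p) (Fin p) ℝ) * diagonal hA.eigenvalues *
      star (hA.eigenvectorUnitary : Matrix (Fin p) (Fin p) ℝ) := by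
  have := conj_poly hA 0 1
  simpa using this

lemma trace_sq (M : Matrix (Fin p) (Fin p) ℝ) :
    trace (M * M) = ∑ i, ∑ j, M i j * M j i := by
  simp [Matrix.trace, Matrix.diag, Matrix.mul_apply]

lemma key_trace {A Δ : Matrix (Fin p) (Fin p) ℝ} (hA : A.PosDef) (hΔ : Δ.IsHermitian)
    {b B : ℝ} (hb : 0 < b) (hB : 0 < B)
    (h1 : (A - b • 1).PosSemidef) (h2 : (B • 1 - A).PosSemidef) :
    trace (Δ * Δ) / B^2 ≤ trace (A⁻¹ * Δ * A⁻¹ * Δ) ∧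
      trace (A⁻¹ * Δ * A⁻¹ * Δ) ≤ trace (Δ * Δ) / b^2 := by
  have hH := hA.1
  set U := (hH.eigenvectorUnitary : Matrix (Fin p) (Fin p) ℝ) with hU
  set lam := hH.eigenvalues with hlam
  have hUU : U * star U = 1 := (Matrix.mem_unitaryGroup_iff).mp hH.eigenvectorUnitary.2
  have hsUU : star U * U = 1 := (Matrix.mem_unitaryGroup_iff').mp hH.eigenvectorUnitary.2
  have hbe : ∀ i, b ≤ lam i := fun i => eig_ge_of_psd hH h1 i
  have hBe : ∀ i, lam i ≤ B := fun i => eig_le_of_psd hH h2 i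
  have hpos : ∀ i, 0 < lam i := fun i => lt_of_lt_of_le hb (hbe i)
  have hspec : A = U * diagonal lam * star U := eigSpec hH
  have hAinv : A⁻¹ = U * diagonal (fun i => (lam i)⁻¹) * star U := by
    rw [hspec]
    exact inv_conj' hUU hsUU (fun i => ne_of_gt (hpos i))
  set X := star U * Δ * U with hX
  have hXsym : ∀ i j, X j i = X i j := by
    have hXH : Xᴴ = X := by
      rw [hX, Matrix.conjTranspose_mul, Matrix.conjTranspose_mul, hΔ.eq,
        Matrix.star_eq_conjTranspose, Matrix.conjTranspose_conjTranspose, Matrix.mul_assoc]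
    intro i j
    have := congrFun (congrFun hXH i) j
    rwa [Matrix.conjTranspose_apply, star_trivial] at this
  have hΔc : Δ = U * X * star U := by
    rw [hX]
    simp only [Matrix.mul_assoc, ← Matrix.mul_assoc U (star U), hUU]
    simp [← Matrix.mul_assoc]
  -- reduce traces to diagonal form
  have hT1 : trace (A⁻¹ * Δ * A⁻¹ * Δ) =
      trace (diagonal (fun i => (lam i)⁻¹) * X * diagonal (fun i => (lam i)⁻¹) * X) := by
    have hid : A⁻¹ * Δ * A⁻¹ * Δ =
        U * (diagonal (fun i => (lam i)⁻¹) * X * diagonal (fun i => (lam i)⁻¹) * X) * star U := by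
      rw [hAinv]
      nth_rewrite 1 [hΔc]
      nth_rewrite 1 [hΔc]
      simp only [Matrix.mul_assoc, ← Matrix.mul_assoc (star U) U, hsUU, Matrix.one_mul]
    rw [hid, trace_conj' hsUU]
  have hT2 : trace (Δ * Δ) = trace (X * X) := by
    have hid : Δ * Δ = U * (X * X) * star U := by
      nth_rewrite 1 [hΔc]
      nth_rewrite 1 [hΔc]
      simp only [Matrix.mul_assoc, ← Matrix.mul_assoc (star U) U, hsUU, Matrix.one_mul]
    rw [hid, trace_conj' hsUU]
  -- entrywise sums
  have hS1 : trace (diagonal (fun i => (lam i)⁻¹) * X * diagonal (fun i => (lam i)⁻¹) * X)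
      = ∑ i, ∑ j, (X i j)^2 * ((lam i)⁻¹ * (lam j)⁻¹) := by
    have : diagonal (fun i => (lam i)⁻¹) * X * diagonal (fun i => (lam i)⁻¹) * X =
        (diagonal (fun i => (lam i)⁻¹) * X) * (diagonal (fun i => (lam i)⁻¹) * X) := by
      simp [Matrix.mul_assoc]
    rw [this, trace_sq]
    apply Finset.sum_congr rfl
    intro i _
    apply Finset.sum_congr rfl
    intro j _
    rw [Matrix.diagonal_mul, Matrix.diagonal_mul, hXsym i j]
    ring
  have hS2 : trace (X * X) = ∑ i, ∑ j, (X i j)^2 := by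
    rw [trace_sq]
    apply Finset.sum_congr rfl
    intro i _
    apply Finset.sum_congr rfl
    intro j _
    rw [hXsym i j]
    ring
  rw [hT1, hT2, hS1, hS2]
  constructor
  · rw [Finset.sum_div]
    apply Finset.sum_le_sum
    intro i _
    rw [Finset.sum_div]
    apply Finset.sum_le_sum
    intro j _
    rw [div_eq_mul_inv, ← mul_inv]
    apply mul_le_mul_of_nonneg_left _ (sq_nonneg (X i j))
    apply inv_anti₀
    · exact mul_pos (hpos i) (hpos j)
    · calc lam i * lam j ≤ B * lam j := by
            apply mul_le_mul_of_nonneg_right (hBe i) (le_of_lt (hpos j))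
        _ ≤ B * B := by apply mul_le_mul_of_nonneg_left (hBe j) (le_of_lt hB)
        _ = B^2 := by ring
  · rw [Finset.sum_div]
    apply Finset.sum_le_sum
    intro i _
    rw [Finset.sum_div]
    apply Finset.sum_le_sum
    intro j _
    rw [div_eq_mul_inv, ← mul_inv]
    apply mul_le_mul_of_nonneg_left _ (sq_nonneg (X i j))
    apply inv_anti₀
    · exact pow_pos hb 2
    · calc b^2 = b * b := by ring
        _ ≤ lam i * b := by apply mul_le_mul_of_nonneg_right (hbe i) (le_of_lt hb)
        _ ≤ lam i * lam j := by apply mul_le_mul_of_nonneg_left (hbe j) (le_of_lt (hpos i))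

lemma eigSet_eq {A : Matrix (Fin p) (Fin p) ℝ} (hA : A.IsHermitian) :
    {r : ℝ | Module.End.HasEigenvalue (Matrix.toLin' A) r} = Set.range hA.eigenvalues :=
  Set.Subset.antisymm (fun _ hμ => eig_mem_range hA hμ)
    (fun _ ⟨i, hi⟩ => hi ▸ hasEig_eigenvalues hA i)

lemma eig_bounds [Nonempty (Fin p)] {A : Matrix (Fin p) (Fin p) ℝ} (hA : A.IsHermitian)
    {b B : ℝ} (hbl : b ≤ lamMin A) (hBu : lamMax A ≤ B) (i : Fin p) :
    b ≤ hA.eigenvalues i ∧ hA.eigenvalues i ≤ B := by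
  unfold lamMin at hbl
  unfold lamMax at hBu
  rw [eigSet_eq hA] at hbl hBu
  have hfin : (Set.range hA.eigenvalues).Finite := Set.finite_range _
  constructor
  · exact le_trans hbl (csInf_le hfin.bddBelow ⟨i, rfl⟩)
  · exact le_trans (le_csSup hfin.bddAbove ⟨i, rfl⟩) hBu

open scoped MatrixOrder in
set_option maxHeartbeats 1000000 in
lemma main_core (θ ϑ : Matrix (Fin p) (Fin p) ℝ) (hθ : θ.PosDef) (hϑ : ϑ.PosDef)
    {b B : ℝ} (hb : 0 < b) (hB : 0 < B)
    (hθ1 : (θ - b • 1).PosSemidef) (hθ2 : (B • 1 - θ).PosSemidef)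
    (hϑ1 : (ϑ - b • 1).PosSemidef) (hϑ2 : (B • 1 - ϑ).PosSemidef) :
    trace ((ϑ-θ)*(ϑ-θ))/B^2/2 ≤
      -Real.log ϑ.det + Real.log θ.det + trace (θ⁻¹ * (ϑ - θ)) ∧
    -Real.log ϑ.det + Real.log θ.det + trace (θ⁻¹ * (ϑ - θ)) ≤
      trace ((ϑ-θ)*(ϑ-θ))/b^2/2 := by
  set Δ := ϑ - θ with hΔdef
  have hΔH : Δ.IsHermitian := hϑ.1.sub hθ.1
  have hpsd := hθ.posSemidef
  set R := CFC.sqrt θ with hRdef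
  have hRR : R * R = θ := CFC.sqrt_mul_sqrt_self θ hpsd.nonneg
  have hRH : R.IsHermitian := (CFC.sqrt_nonneg θ).posSemidef.1
  have hdetθ : 0 < θ.det := hθ.det_pos
  have hdetR : R.det ≠ 0 := by
    intro h
    rw [← hRR, det_mul, h, mul_zero] at hdetθ
    exact lt_irrefl 0 hdetθ
  have hRu : IsUnit R.det := isUnit_iff_ne_zero.mpr hdetR
  have hRiR : R⁻¹ * R = 1 := nonsing_inv_mul R hRu
  have hRRi : R * R⁻¹ = 1 := mul_nonsing_inv R hRu
  have hRiH : R⁻¹.IsHermitian := by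
    unfold Matrix.IsHermitian
    rw [conjTranspose_nonsing_inv, hRH.eq]
  set M := R⁻¹ * Δ * R⁻¹ with hMdef
  have hMH : M.IsHermitian := by
    unfold Matrix.IsHermitian
    rw [hMdef, Matrix.conjTranspose_mul, Matrix.conjTranspose_mul, hRiH.eq, hΔH.eq,
      Matrix.mul_assoc]
  set x := hMH.eigenvalues with hxdef
  set V := (hMH.eigenvectorUnitary : Matrix (Fin p) (Fin p) ℝ) with hVdef
  have hVV : V * star V = 1 := (Matrix.mem_unitaryGroup_iff).mp hMH.eigenvectorUnitary.2
  have hsVV : star V * V = 1 := (Matrix.mem_unitaryGroup_iff').mp hMH.eigenvectorUnitary.2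
  have hMspec : M = V * diagonal x * star V := eigSpec hMH
  have hΔRMR : R * M * R = Δ := by
    calc R * (R⁻¹ * Δ * R⁻¹) * R = (R * R⁻¹) * (Δ * (R⁻¹ * R)) := by
          simp only [Matrix.mul_assoc]
      _ = Δ := by rw [hRRi, hRiR, Matrix.one_mul, Matrix.mul_one]
  -- facts about A_t for t ∈ [0,1]
  have hAtconj : ∀ t : ℝ, θ + t • Δ = R * (1 + t • M) * R := by
    intro t
    rw [Matrix.mul_add, Matrix.mul_one, Matrix.add_mul, hRR, mul_smul_comm,
      smul_mul_assoc, hΔRMR]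
  have hconj1tM : ∀ t : ℝ, 1 + t • M = V * diagonal (fun i => 1 + t * x i) * star V := by
    intro t
    have := conj_poly hMH 1 t
    simpa using this
  have hAtpsd1 : ∀ t ∈ Set.Icc (0:ℝ) 1, ((θ + t • Δ) - b • 1).PosSemidef := by
    intro t ht
    have hid : (θ + t • Δ) - b • 1 = (1-t) • (θ - b • 1) + t • (ϑ - b • 1) := by
      rw [hΔdef]; module
    rw [hid]
    exact (psd_smul hθ1 (by linarith [ht.2])).add (psd_smul hϑ1 ht.1)
  have hAtpsd2 : ∀ t ∈ Set.Icc (0:ℝ) 1, (B • 1 - (θ + t • Δ)).PosSemidef := by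
    intro t ht
    have hid : B • 1 - (θ + t • Δ) = (1-t) • (B • 1 - θ) + t • (B • 1 - ϑ) := by
      rw [hΔdef]; module
    rw [hid]
    exact (psd_smul hθ2 (by linarith [ht.2])).add (psd_smul hϑ2 ht.1)
  have hbIpd : ((b : ℝ) • (1 : Matrix (Fin p) (Fin p) ℝ)).PosDef := by
    rw [Matrix.smul_one_eq_diagonal]
    exact Matrix.PosDef.diagonal (fun _ => hb)
  have hAtpd : ∀ t ∈ Set.Icc (0:ℝ) 1, (θ + t • Δ).PosDef := by
    intro t ht
    have hid : θ + t • Δ = b • 1 + ((θ + t • Δ) - b • 1) := by module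
    rw [hid]
    exact hbIpd.add_posSemidef (hAtpsd1 t ht)
  have h1tMpsd : ∀ t ∈ Set.Icc (0:ℝ) 1, (1 + t • M).PosSemidef := by
    intro t ht
    have h := ((hAtpd t ht).posSemidef).conjTranspose_mul_mul_same R⁻¹
    rw [hRiH.eq] at h
    have hid : R⁻¹ * (θ + t • Δ) * R⁻¹ = 1 + t • M := by
      rw [hAtconj t]
      calc R⁻¹ * (R * (1 + t • M) * R) * R⁻¹
          = (R⁻¹ * R) * ((1 + t • M) * (R * R⁻¹)) := by simp only [Matrix.mul_assoc]
        _ = 1 + t • M := by rw [hRiR, hRRi, Matrix.one_mul, Matrix.mul_one]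
    rwa [hid] at h
  have hdet1tM : ∀ t : ℝ, det (1 + t • M) = ∏ i, (1 + t * x i) := by
    intro t
    rw [hconj1tM t, det_conj' hVV, det_diagonal]
  have hposw : ∀ t ∈ Set.Icc (0:ℝ) 1, ∀ i, 0 < 1 + t * x i := by
    intro t ht i
    have hnn : 0 ≤ 1 + t * x i := by
      have hv : M *ᵥ ⇑(hMH.eigenvectorBasis i) = x i • ⇑(hMH.eigenvectorBasis i) :=
        hMH.mulVec_eigenvectorBasis i
      set v := ⇑(hMH.eigenvectorBasis i) with hvdef
      have hv0 : v ≠ 0 := by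
        intro hz
        apply hMH.eigenvectorBasis.orthonormal.ne_zero i
        ext j
        exact congrFun hz j
      have hq : 0 < dotProduct v v := by
        have := dotProduct_self_star_pos_iff (v := v)
        simpa using this.mpr hv0
      have h2 := (h1tMpsd t ht).dotProduct_mulVec_nonneg v
      rw [Matrix.add_mulVec, Matrix.one_mulVec, Matrix.smul_mulVec, hv] at h2
      simp only [star_trivial, dotProduct_add, dotProduct_smul, smul_smul, smul_eq_mul] at h2
      nlinarith
    rcases hnn.eq_or_lt with h|h
    · exfalso
      have hdet : det (1 + t • M) ≠ 0 := by
        have := (hAtpd t ht).det_pos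
        rw [hAtconj t, det_mul, det_mul] at this
        intro hz
        rw [hz] at this
        simp at this
      rw [hdet1tM t] at hdet
      exact hdet (Finset.prod_eq_zero (Finset.mem_univ i) (by linarith))
    · exact h
  have hx1 : ∀ i, 0 < 1 + x i := by
    intro i
    have := hposw 1 (Set.right_mem_Icc.mpr zero_le_one) i
    simpa using this
  -- trace identity
  have htrace_id : ∀ t ∈ Set.Icc (0:ℝ) 1,
      trace ((θ + t • Δ)⁻¹ * Δ * (θ + t • Δ)⁻¹ * Δ) = ∑ i, (x i)^2 / (1 + t * x i)^2 := by
    intro t ht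
    have hwne : ∀ i, (1 + t * x i) ≠ 0 := fun i => ne_of_gt (hposw t ht i)
    have hWinv : (1 + t • M)⁻¹ = V * diagonal (fun i => (1 + t * x i)⁻¹) * star V := by
      rw [hconj1tM t]
      exact inv_conj' hVV hsVV hwne
    have hAtinv : (θ + t • Δ)⁻¹ = R⁻¹ * ((1 + t • M)⁻¹ * R⁻¹) := by
      rw [hAtconj t, Matrix.mul_inv_rev, Matrix.mul_inv_rev]
    have hid : (θ + t • Δ)⁻¹ * Δ * (θ + t • Δ)⁻¹ * Δ =
        R⁻¹ * ((1 + t • M)⁻¹ * M * (1 + t • M)⁻¹ * M) * R := by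
      rw [hAtinv]
      nth_rewrite 1 [← hΔRMR]
      nth_rewrite 1 [← hΔRMR]
      calc R⁻¹ * ((1 + t • M)⁻¹ * R⁻¹) * (R * M * R) * (R⁻¹ * ((1 + t • M)⁻¹ * R⁻¹)) * (R * M * R)
          = R⁻¹ * ((1 + t • M)⁻¹ * ((R⁻¹ * R) * (M * ((R * R⁻¹) *
              ((1 + t • M)⁻¹ * ((R⁻¹ * R) * (M * R))))))) := by simp only [Matrix.mul_assoc]
        _ = R⁻¹ * ((1 + t • M)⁻¹ * M * (1 + t • M)⁻¹ * M) * R := by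
            rw [hRiR, hRRi]
            simp only [Matrix.one_mul, Matrix.mul_assoc]
    rw [hid]
    have hcyc : trace (R⁻¹ * ((1 + t • M)⁻¹ * M * (1 + t • M)⁻¹ * M) * R) =
        trace ((1 + t • M)⁻¹ * M * (1 + t • M)⁻¹ * M) := by
      rw [trace_mul_comm, ← Matrix.mul_assoc, hRRi, Matrix.one_mul]
    rw [hcyc]
    have hprod : (1 + t • M)⁻¹ * M * (1 + t • M)⁻¹ * M =
        V * diagonal (fun i => (1 + t * x i)⁻¹ * x i * (1 + t * x i)⁻¹ * x i) * star V := by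
      rw [hWinv, hMspec]
      calc (V * diagonal (fun i => (1 + t * x i)⁻¹) * star V) * (V * diagonal x * star V) *
            (V * diagonal (fun i => (1 + t * x i)⁻¹) * star V) * (V * diagonal x * star V)
          = V * (diagonal (fun i => (1 + t * x i)⁻¹) * ((star V * V) * (diagonal x *
              ((star V * V) * (diagonal (fun i => (1 + t * x i)⁻¹) * ((star V * V) *
              (diagonal x * star V))))))) := by simp only [Matrix.mul_assoc]
        _ = V * (diagonal (fun i => (1 + t * x i)⁻¹) * diagonal x *
              diagonal (fun i => (1 + t * x i)⁻¹) * diagonal x) * star V := by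
            rw [hsVV]
            simp only [Matrix.one_mul, Matrix.mul_assoc]
        _ = V * diagonal (fun i => (1 + t * x i)⁻¹ * x i * (1 + t * x i)⁻¹ * x i) * star V := by
            rw [diagonal_mul_diagonal, diagonal_mul_diagonal, diagonal_mul_diagonal]
    rw [hprod, trace_conj' hsVV, trace_diagonal]
    apply Finset.sum_congr rfl
    intro i _
    have hne := hwne i
    field_simp
  -- determinant identity
  have hdetRR : θ.det = R.det * R.det := by rw [← hRR, det_mul]
  have hdetϑ : ϑ.det = θ.det * ∏ i, (1 + x i) := by
    have h1 : ϑ = θ + (1:ℝ) • Δ := by rw [one_smul, hΔdef]; abel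
    rw [h1, hAtconj 1, det_mul, det_mul, hdet1tM 1]
    simp only [one_mul]
    rw [hdetRR]
    ring
  -- trace identity for θ⁻¹ Δ
  have htrθΔ : trace (θ⁻¹ * Δ) = ∑ i, x i := by
    have hθinv : θ⁻¹ = R⁻¹ * R⁻¹ := by rw [← hRR, Matrix.mul_inv_rev]
    have hid2 : θ⁻¹ * Δ = R⁻¹ * (M * R) := by
      rw [hθinv]
      nth_rewrite 1 [← hΔRMR]
      calc R⁻¹ * R⁻¹ * (R * M * R) = R⁻¹ * ((R⁻¹ * R) * (M * R)) := by
            simp only [Matrix.mul_assoc]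
        _ = R⁻¹ * (M * R) := by rw [hRiR, Matrix.one_mul]
    rw [hid2, trace_mul_comm, Matrix.mul_assoc, hRRi, Matrix.mul_one]
    rw [hMspec, trace_conj' hsVV, trace_diagonal]
  -- log identity
  have hprodpos : (0:ℝ) < ∏ i, (1 + x i) := Finset.prod_pos (fun i _ => hx1 i)
  have hlog : -Real.log ϑ.det + Real.log θ.det = -∑ i, Real.log (1 + x i) := by
    rw [hdetϑ, Real.log_mul (ne_of_gt hdetθ) (ne_of_gt hprodpos),
      Real.log_prod (fun i _ => ne_of_gt (hx1 i))]
    ring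
  have hD : -Real.log ϑ.det + Real.log θ.det + trace (θ⁻¹ * Δ) =
      ∑ i, (x i - Real.log (1 + x i)) := by
    rw [hlog, htrθΔ, Finset.sum_sub_distrib]
    ring
  constructor
  · rw [hD]
    apply scalar_lower x hx1
    intro t ht
    rw [← htrace_id t ht]
    exact (key_trace (hAtpd t ht) hΔH hb hB (hAtpsd1 t ht) (hAtpsd2 t ht)).1
  · rw [hD]
    apply scalar_upper x hx1
    intro t ht
    rw [← htrace_id t ht]
    exact (key_trace (hAtpd t ht) hΔH hb hB (hAtpsd1 t ht) (hAtpsd2 t ht)).2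


lemma loewner_lower {A : Matrix (Fin p) (Fin p) ℝ} (hA : A.IsHermitian) {c : ℝ}
    (h : ∀ i, c ≤ hA.eigenvalues i) : (A - c • 1).PosSemidef := by
  have hc := conj_poly hA (-c) 1
  have hid : A - c • 1 = (-c) • 1 + (1:ℝ) • A := by module
  rw [hid, hc]
  exact psd_conj' (fun i => by simp only [one_mul]; linarith [h i])

lemma loewner_upper {A : Matrix (Fin p) (Fin p) ℝ} (hA : A.IsHermitian) {c : ℝ}
    (h : ∀ i, hA.eigenvalues i ≤ c) : (c • 1 - A).PosSemidef := by
  have hc := conj_poly hA c (-1)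
  have hid : c • 1 - A = c • 1 + (-1 : ℝ) • A := by module
  rw [hid, hc]
  exact psd_conj' (fun i => by linarith [h i])

end LogDetAux

/-- Lemma 2 part 1, first half: two-sided quadratic bounds for
`g(θ) = -log det θ + Tr(θS)` on `M_p⁺(b,B)`, with gradient `∇g(θ) = S - θ⁻¹` and
trace inner product. -/
theorem logdet_two_sided_quadratic_bounds
    (p : ℕ) (S : Matrix (Fin p) (Fin p) ℝ) (hS : S.IsSymm)
    (b B : ℝ) (hb : 0 < b) (hbB : b < B)
    (θ ϑ : Matrix (Fin p) (Fin p) ℝ) (hθ : Mpp b B θ) (hϑ : Mpp b B ϑ) :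
    gdet S θ + ((S - θ⁻¹) * (ϑ - θ)).trace + 1/(2*B^2) * (frob (ϑ - θ))^2 ≤ gdet S ϑ ∧
    gdet S ϑ ≤ gdet S θ + ((S - θ⁻¹) * (ϑ - θ)).trace + 1/(2*b^2) * (frob (ϑ - θ))^2 := by
  rcases Nat.eq_zero_or_pos p with hp | hp
  · subst hp
    constructor <;>
      simp [gdet, frob, Matrix.det_fin_zero, Matrix.trace]
  · haveI : Nonempty (Fin p) := ⟨⟨0, hp⟩⟩
    have hB : 0 < B := lt_trans hb hbB
    obtain ⟨hθpd, hθmin, hθmax⟩ := hθ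
    obtain ⟨hϑpd, hϑmin, hϑmax⟩ := hϑ
    have hbθ := fun i => LogDetAux.eig_bounds hθpd.1 hθmin hθmax i
    have hbϑ := fun i => LogDetAux.eig_bounds hϑpd.1 hϑmin hϑmax i
    have hθ1 := LogDetAux.loewner_lower hθpd.1 (fun i => (hbθ i).1)
    have hθ2 := LogDetAux.loewner_upper hθpd.1 (fun i => (hbθ i).2)
    have hϑ1 := LogDetAux.loewner_lower hϑpd.1 (fun i => (hbϑ i).1)
    have hϑ2 := LogDetAux.loewner_upper hϑpd.1 (fun i => (hbϑ i).2)
    have hcore := LogDetAux.main_core θ ϑ hθpd hϑpd hb hB hθ1 hθ2 hϑ1 hϑ2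
    set Δ := ϑ - θ with hΔdef
    have hΔH : Δ.IsHermitian := hϑpd.1.sub hθpd.1
    have hfrob : (frob Δ)^2 = Matrix.trace (Δ * Δ) := by
      rw [frob, Real.sq_sqrt (by positivity)]
      rw [LogDetAux.trace_sq]
      apply Finset.sum_congr rfl
      intro i _
      apply Finset.sum_congr rfl
      intro j _
      have hsymm : Δ j i = Δ i j := by
        have h2 := congrFun (congrFun hΔH.eq i) j
        rwa [Matrix.conjTranspose_apply, star_trivial] at h2
      rw [hsymm]
      ring
    have htr : Matrix.trace ((S - θ⁻¹) * Δ) =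
        Matrix.trace (ϑ * S) - Matrix.trace (θ * S) - Matrix.trace (θ⁻¹ * Δ) := by
      rw [Matrix.sub_mul, Matrix.trace_sub]
      congr 1
      rw [hΔdef, Matrix.mul_sub, Matrix.trace_sub, Matrix.trace_mul_comm S ϑ,
        Matrix.trace_mul_comm S θ]
    have e1 : 1/(2*B^2) * (frob Δ)^2 = Matrix.trace (Δ * Δ)/B^2/2 := by
      rw [hfrob]; ring
    have e2 : 1/(2*b^2) * (frob Δ)^2 = Matrix.trace (Δ * Δ)/b^2/2 := by
      rw [hfrob]; ring
    simp only [gdet]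
    rw [htr, e1, e2]
    constructor
    · linarith [hcore.1]
    · linarith [hcore.2]

end
end

section
/- Let S be a real symmetric p×p matrix and define g(θ) = −log det θ + Tr(θS) on positive definite θ, with ∇g(θ) = S − θ⁻¹. Then for all positive definite symmetric θ, ϑ: g(ϑ) − g(θ) − ⟨∇g(θ), ϑ−θ⟩ ≥ ‖ϑ−θ‖_F² / (4‖θ‖₂(‖θ‖₂ + ½‖ϑ−θ‖_F)), where ‖θ‖₂ is the spectral norm. -/
open Matrix Finset MeasureTheory ProbabilityTheory Filter

noncomputable section

section SCHelpers
variable {p : ℕ}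

lemma scalar_ineq (μ : ℝ) (hμ : 0 < μ) :
    (μ-1)^2/(2*(2+|μ-1|)) ≤ μ - 1 - Real.log μ := by
  set s := Real.sqrt μ with hs
  have hs0 : 0 < s := Real.sqrt_pos.mpr hμ
  have hsq : s^2 = μ := Real.sq_sqrt hμ.le
  have hlog : Real.log μ = 2 * Real.log s := by
    rw [← hsq, Real.log_pow]; push_cast; ring
  have hls : Real.log s ≤ s - 1 := Real.log_le_sub_one_of_pos hs0
  have hkey : (s-1)^2 ≤ μ - 1 - Real.log μ := by
    rw [hlog, ← hsq]; nlinarith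
  rcases le_or_gt 1 μ with h1 | h1
  · have habs : |μ-1| = μ-1 := abs_of_nonneg (by linarith)
    rw [habs]
    have hd : 0 < 2*(2+(μ-1)) := by linarith
    refine le_trans ?_ hkey
    rw [div_le_iff₀ hd, ← hsq]
    nlinarith [sq_nonneg (s-1), sq_nonneg ((s-1)^2)]
  · have habs : |μ-1| = 1-μ := by rw [abs_of_neg (by linarith : μ-1 < 0)]; ring
    rw [habs]
    have hd : 0 < 2*(2+(1-μ)) := by linarith
    refine le_trans ?_ hkey
    rw [div_le_iff₀ hd, ← hsq]
    have hs1 : s ≤ 1 := by nlinarith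
    nlinarith [sq_nonneg (s-1), mul_nonneg (sq_nonneg (s-1)) (mul_nonneg hs0.le (sub_nonneg.mpr hs1))]

lemma frob_nonneg (M : Matrix (Fin p) (Fin p) ℝ) : 0 ≤ frob M := Real.sqrt_nonneg _

lemma frob_sq (M : Matrix (Fin p) (Fin p) ℝ) : (frob M)^2 = ∑ i, ∑ j, (M i j)^2 :=
  Real.sq_sqrt (by positivity)

lemma vnorm_nonneg (v : Fin p → ℝ) : 0 ≤ vnorm v := Real.sqrt_nonneg _

lemma vnorm_sq (v : Fin p → ℝ) : (vnorm v)^2 = ∑ i, (v i)^2 := Real.sq_sqrt (by positivity)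

lemma vnorm_smul (a : ℝ) (v : Fin p → ℝ) : vnorm (a • v) = |a| * vnorm v := by
  unfold vnorm
  rw [← Real.sqrt_sq_eq_abs, ← Real.sqrt_mul (sq_nonneg a), Finset.mul_sum]
  congr 1; apply Finset.sum_congr rfl; intro i _; simp [Pi.smul_apply]; ring

lemma vnorm_eq_zero {v : Fin p → ℝ} (h : vnorm v = 0) : v = 0 := by
  have h2 : ∑ i, (v i)^2 ≤ 0 := Real.sqrt_eq_zero'.mp h
  have h3 : ∑ i, (v i)^2 = 0 := le_antisymm h2 (by positivity)
  funext i
  have := (Finset.sum_eq_zero_iff_of_nonneg (fun j _ => sq_nonneg (v j))).mp h3 i (Finset.mem_univ i)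
  exact pow_eq_zero_iff (by norm_num) |>.mp this

lemma dot_le_vnorm_mul (v w : Fin p → ℝ) : v ⬝ᵥ w ≤ vnorm v * vnorm w := by
  have hcs := Finset.sum_mul_sq_le_sq_mul_sq Finset.univ v w
  have h1 : v ⬝ᵥ w ≤ Real.sqrt ((v ⬝ᵥ w)^2) := by
    rw [Real.sqrt_sq_eq_abs]; exact le_abs_self _
  refine h1.trans ?_
  rw [show vnorm v * vnorm w = Real.sqrt ((∑ i, (v i)^2) * (∑ i, (w i)^2)) from
    (Real.sqrt_mul (by positivity) _).symm]
  exact Real.sqrt_le_sqrt hcs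

lemma vnorm_mulVec_le_frob (M : Matrix (Fin p) (Fin p) ℝ) {v : Fin p → ℝ} (hv : vnorm v = 1) :
    vnorm (M.mulVec v) ≤ frob M := by
  have hv2 : ∑ i, (v i)^2 = 1 := by rw [← vnorm_sq, hv]; norm_num
  unfold vnorm frob
  apply Real.sqrt_le_sqrt
  apply Finset.sum_le_sum
  intro i _
  calc (M.mulVec v i)^2 = (∑ j, M i j * v j)^2 := by rfl
    _ ≤ (∑ j, (M i j)^2) * (∑ j, (v j)^2) := Finset.sum_mul_sq_le_sq_mul_sq _ _ _
    _ = ∑ j, (M i j)^2 := by rw [hv2, mul_one]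

lemma specNorm_bddAbove (M : Matrix (Fin p) (Fin p) ℝ) :
    BddAbove {r : ℝ | ∃ v : Fin p → ℝ, vnorm v = 1 ∧ r = vnorm (M.mulVec v)} := by
  refine ⟨frob M, fun r hr => ?_⟩
  obtain ⟨v, hv, rfl⟩ := hr
  exact vnorm_mulVec_le_frob M hv

lemma specNorm_nonneg (M : Matrix (Fin p) (Fin p) ℝ) : 0 ≤ specNorm M :=
  Real.sSup_nonneg (fun r hr => by obtain ⟨v, _, rfl⟩ := hr; exact vnorm_nonneg _)

lemma quad_le_specNorm (M : Matrix (Fin p) (Fin p) ℝ) (x : Fin p → ℝ) :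
    x ⬝ᵥ M.mulVec x ≤ specNorm M * ∑ i, (x i)^2 := by
  by_cases hx : x = 0
  · simp [hx]
  · have hnx : 0 < vnorm x := by
      rcases (vnorm_nonneg x).lt_or_eq with h | h
      · exact h
      · exact absurd (vnorm_eq_zero h.symm) hx
    set c := vnorm x with hc
    set v := c⁻¹ • x with hvdef
    have hx' : x = c • v := by rw [hvdef, smul_smul, mul_inv_cancel₀ hnx.ne', one_smul]
    have hv1 : vnorm v = 1 := by
      rw [hvdef, vnorm_smul, abs_of_pos (inv_pos.mpr hnx), inv_mul_cancel₀ hnx.ne']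
    have hmem : vnorm (M.mulVec v) ∈
        {r : ℝ | ∃ w : Fin p → ℝ, vnorm w = 1 ∧ r = vnorm (M.mulVec w)} := ⟨v, hv1, rfl⟩
    have hle : vnorm (M.mulVec v) ≤ specNorm M := le_csSup (specNorm_bddAbove M) hmem
    have hq : v ⬝ᵥ M.mulVec v ≤ specNorm M := by
      refine le_trans (dot_le_vnorm_mul _ _) ?_
      rw [hv1, one_mul]; exact hle
    have hxx : x ⬝ᵥ M.mulVec x = c^2 * (v ⬝ᵥ M.mulVec v) := by
      rw [hx']
      rw [smul_dotProduct, mulVec_smul, dotProduct_smul]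
      simp [smul_eq_mul]; ring
    rw [hxx]
    have hsum : ∑ i, (x i)^2 = c^2 := by rw [hc, vnorm_sq]
    rw [hsum]
    have := mul_le_mul_of_nonneg_left hq (sq_nonneg c)
    linarith



lemma trace_nonneg_of_psd {A : Matrix (Fin p) (Fin p) ℝ} (hA : A.PosSemidef) :
    0 ≤ A.trace := by
  rw [Matrix.trace]
  apply Finset.sum_nonneg
  intro i _
  exact hA.diag_nonneg

open scoped MatrixOrder in
lemma psd_sqrt_exists {θ : Matrix (Fin p) (Fin p) ℝ} (h : θ.PosSemidef) :
    ∃ R : Matrix (Fin p) (Fin p) ℝ, R.PosSemidef ∧ R * R = θ :=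
  ⟨CFC.sqrt θ, Matrix.nonneg_iff_posSemidef.mp (CFC.sqrt_nonneg θ),
    CFC.sqrt_mul_sqrt_self θ h.nonneg⟩

lemma psd_eq_conjTranspose_mul_self {B : Matrix (Fin p) (Fin p) ℝ} (hB : B.PosSemidef) :
    ∃ C : Matrix (Fin p) (Fin p) ℝ, B = Cᴴ * C := by
  obtain ⟨R, hR, hRR⟩ := psd_sqrt_exists hB
  exact ⟨R, by rw [hR.1.eq, hRR]⟩

lemma trace_mul_nonneg_of_psd {A B : Matrix (Fin p) (Fin p) ℝ}
    (hA : A.PosSemidef) (hB : B.PosSemidef) : 0 ≤ (A * B).trace := by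
  obtain ⟨C, rfl⟩ := psd_eq_conjTranspose_mul_self hB
  have h1 : (A * (Cᴴ * C)).trace = (C * A * Cᴴ).trace := by
    rw [← Matrix.mul_assoc, Matrix.trace_mul_comm, ← Matrix.mul_assoc]
  rw [h1]
  exact trace_nonneg_of_psd (hA.mul_mul_conjTranspose_same C)



lemma posDef_conj_same {A B : Matrix (Fin p) (Fin p) ℝ} (hA : A.PosDef)
    (hB : IsUnit B) : (Bᴴ * A * B).PosDef := by
  constructor
  · exact Matrix.isHermitian_conjTranspose_mul_mul B hA.1
  · exact ((Matrix.IsUnit.posDef_star_left_conjugate_iff hB).mpr hA).2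

lemma trace_eq_sum_eig {M : Matrix (Fin p) (Fin p) ℝ} (hM : M.IsHermitian) :
    M.trace = ∑ i, hM.eigenvalues i := by
  have hsUU : (star (hM.eigenvectorUnitary : Matrix (Fin p) (Fin p) ℝ)) *
      (hM.eigenvectorUnitary : Matrix (Fin p) (Fin p) ℝ) = 1 :=
    Matrix.mem_unitaryGroup_iff'.mp hM.eigenvectorUnitary.2
  have hofReal : (RCLike.ofReal ∘ hM.eigenvalues : Fin p → ℝ) = hM.eigenvalues := by
    funext i; simp [RCLike.ofReal]
  conv_lhs => rw [hM.spectral_theorem, Unitary.conjStarAlgAut_apply]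
  rw [Matrix.trace_mul_cycle, hsUU, Matrix.one_mul, hofReal, Matrix.trace_diagonal]

lemma trace_sq_eq_sum_eig_sq {M : Matrix (Fin p) (Fin p) ℝ} (hM : M.IsHermitian) :
    (M * M).trace = ∑ i, (hM.eigenvalues i)^2 := by
  have hsUU : (star (hM.eigenvectorUnitary : Matrix (Fin p) (Fin p) ℝ)) *
      (hM.eigenvectorUnitary : Matrix (Fin p) (Fin p) ℝ) = 1 :=
    Matrix.mem_unitaryGroup_iff'.mp hM.eigenvectorUnitary.2
  have hofReal : (RCLike.ofReal ∘ hM.eigenvalues : Fin p → ℝ) = hM.eigenvalues := by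
    funext i; simp [RCLike.ofReal]
  have hMM : M * M = (hM.eigenvectorUnitary : Matrix (Fin p) (Fin p) ℝ) *
      (Matrix.diagonal (RCLike.ofReal ∘ hM.eigenvalues) *
        Matrix.diagonal (RCLike.ofReal ∘ hM.eigenvalues)) *
      (star (hM.eigenvectorUnitary : Matrix (Fin p) (Fin p) ℝ)) := by
    conv_lhs => rw [hM.spectral_theorem, Unitary.conjStarAlgAut_apply]
    calc (hM.eigenvectorUnitary : Matrix (Fin p) (Fin p) ℝ) *
          Matrix.diagonal (RCLike.ofReal ∘ hM.eigenvalues) *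
          (star (hM.eigenvectorUnitary : Matrix (Fin p) (Fin p) ℝ)) *
          ((hM.eigenvectorUnitary : Matrix (Fin p) (Fin p) ℝ) *
          Matrix.diagonal (RCLike.ofReal ∘ hM.eigenvalues) *
          (star (hM.eigenvectorUnitary : Matrix (Fin p) (Fin p) ℝ)))
        = (hM.eigenvectorUnitary : Matrix (Fin p) (Fin p) ℝ) *
          Matrix.diagonal (RCLike.ofReal ∘ hM.eigenvalues) *
          (((star (hM.eigenvectorUnitary : Matrix (Fin p) (Fin p) ℝ)) *
          (hM.eigenvectorUnitary : Matrix (Fin p) (Fin p) ℝ)) *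
          (Matrix.diagonal (RCLike.ofReal ∘ hM.eigenvalues) *
          (star (hM.eigenvectorUnitary : Matrix (Fin p) (Fin p) ℝ)))) := by
          simp only [Matrix.mul_assoc]
      _ = _ := by rw [hsUU, Matrix.one_mul]; simp only [Matrix.mul_assoc]
  rw [hMM, Matrix.trace_mul_cycle, hsUU, Matrix.one_mul,
    Matrix.diagonal_mul_diagonal, Matrix.trace_diagonal, hofReal]
  apply Finset.sum_congr rfl
  intro i _
  simp [Pi.mul_apply, sq]

lemma aux_trace_mul_self_eq_sum_sq {A : Matrix (Fin p) (Fin p) ℝ} (hA : A.IsHermitian) :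
    (A * A).trace = ∑ i, ∑ j, (A i j)^2 := by
  have hsymm : ∀ i j, A j i = A i j := by
    intro i j
    have h := congrFun (congrFun hA.symm i) j
    rw [Matrix.conjTranspose_apply, star_trivial] at h
    exact h.symm
  rw [Matrix.trace]
  apply Finset.sum_congr rfl
  intro i _
  rw [Matrix.diag_apply, Matrix.mul_apply]
  apply Finset.sum_congr rfl
  intro j _
  rw [hsymm i j, sq]

lemma aux_final {a b d t : ℝ} (ha : 0 < a) (hb : 0 ≤ b) (hd : 0 ≤ d) (hdt : d^2 = t)
    (hchain : b^2 ≤ a^2 * t) (hden : 0 < 4 * a * (a + 1/2 * b)) :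
    b^2 / (4 * a * (a + 1/2 * b)) ≤ t / (2 * (2 + d)) := by
  have hbad : b ≤ a * d := by
    nlinarith [hchain, hdt, sq_nonneg (b - a*d), sq_nonneg (b + a*d), mul_nonneg ha.le hd]
  rw [div_le_div_iff₀ hden (by positivity)]
  nlinarith [hchain, hdt, mul_le_mul_of_nonneg_right hbad (mul_nonneg hb hd), hb, hd, ha]

set_option maxHeartbeats 1000000 in
lemma aux_main (S : Matrix (Fin p) (Fin p) ℝ)
    (θ ϑ : Matrix (Fin p) (Fin p) ℝ) (hθ : θ.PosDef) (hϑ : ϑ.PosDef) :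
    (frob (ϑ - θ))^2 /
        (4 * specNorm θ * (specNorm θ + (1/2) * frob (ϑ - θ))) ≤
      gdet S ϑ - gdet S θ - ((S - θ⁻¹) * (ϑ - θ)).trace := by
  classical
  have hθps := hθ.posSemidef
  obtain ⟨R, hRps, hRR⟩ := psd_sqrt_exists hθps
  have hRH : R.IsHermitian := hRps.1
  have hdetθ : 0 < θ.det := hθ.det_pos
  have hdetRsq : R.det * R.det = θ.det := by rw [← Matrix.det_mul, hRR]
  have hdetR : IsUnit R.det := by
    have hne : R.det ≠ 0 := by
      intro h; rw [h, mul_zero] at hdetRsq; exact hdetθ.ne hdetRsq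
    exact hne.isUnit
  have hRiR : R⁻¹ * R = 1 := Matrix.nonsing_inv_mul R hdetR
  have hRRi : R * R⁻¹ = 1 := Matrix.mul_nonsing_inv R hdetR
  have hRiH : (R⁻¹).IsHermitian := hRH.inv
  have hRiu : IsUnit (R⁻¹) := Matrix.isUnit_nonsing_inv_iff.mpr ((Matrix.isUnit_iff_isUnit_det R).mpr hdetR)
  set M := R⁻¹ * ϑ * R⁻¹ with hMdef
  have hMpd : M.PosDef := by
    have h := posDef_conj_same hϑ hRiu
    rwa [hRiH] at h
  have hMH : M.IsHermitian := hMpd.1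
  set μ := hMH.eigenvalues with hμdef
  have hμpos : ∀ i, 0 < μ i := fun i => hMpd.eigenvalues_pos i
  have hϑM : R * M * R = ϑ := by
    rw [hMdef]
    calc R * (R⁻¹ * ϑ * R⁻¹) * R = (R * R⁻¹) * ϑ * (R⁻¹ * R) := by noncomm_ring
      _ = ϑ := by rw [hRRi, hRiR, Matrix.one_mul, Matrix.mul_one]
  have hθinv : θ⁻¹ = R⁻¹ * R⁻¹ := by rw [← hRR, Matrix.mul_inv_rev]
  have hdetM : 0 < M.det := hMpd.det_pos
  -- trace identity
  have htraceθinv : (θ⁻¹ * (ϑ - θ)).trace = M.trace - p := by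
    rw [Matrix.mul_sub, Matrix.trace_sub]
    have h1 : (θ⁻¹ * ϑ).trace = M.trace := by
      rw [hθinv, hMdef, Matrix.mul_assoc, Matrix.trace_mul_comm]
    have h2 : (θ⁻¹ * θ).trace = (p : ℝ) := by
      rw [Matrix.nonsing_inv_mul θ hdetθ.ne'.isUnit, Matrix.trace_one]
      simp
    rw [h1, h2]
  -- determinant identity
  have hdetϑ : ϑ.det = θ.det * M.det := by
    rw [← hϑM, Matrix.det_mul, Matrix.det_mul, ← hdetRsq]; ring
  -- RHS = Bregman divergence
  have hRHS : gdet S ϑ - gdet S θ - ((S - θ⁻¹) * (ϑ - θ)).trace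
      = M.trace - p - Real.log M.det := by
    unfold gdet
    rw [hdetϑ, Real.log_mul hdetθ.ne' hdetM.ne']
    rw [Matrix.sub_mul, Matrix.trace_sub, htraceθinv]
    have h1 : (ϑ * S).trace - (θ * S).trace = (S * (ϑ - θ)).trace := by
      rw [Matrix.mul_sub, Matrix.trace_sub, Matrix.trace_mul_comm S ϑ,
        Matrix.trace_mul_comm S θ]
    linarith [h1]
  have hsum : M.trace - p - Real.log M.det = ∑ i, (μ i - 1 - Real.log (μ i)) := by
    rw [trace_eq_sum_eig hMH]
    have hdet2 : M.det = ∏ i, μ i := by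
      rw [hMH.det_eq_prod_eigenvalues]
      apply Finset.prod_congr rfl
      intro i _
      simp [RCLike.ofReal, hμdef]
    rw [hdet2, Real.log_prod (fun i _ => (hμpos i).ne')]
    rw [Finset.sum_sub_distrib, Finset.sum_sub_distrib, Finset.sum_const, Finset.card_univ]
    simp [hμdef]
  rw [hRHS, hsum]
  -- inequality part
  set a := specNorm θ with hadef
  set Δ := ϑ - θ with hΔdef
  set b := frob Δ with hbdef
  have ha0 : 0 ≤ a := specNorm_nonneg θ
  have hb0 : 0 ≤ b := frob_nonneg Δ
  have hD0 : 0 ≤ ∑ i, (μ i - 1 - Real.log (μ i)) := by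
    apply Finset.sum_nonneg
    intro i _
    refine le_trans ?_ (scalar_ineq (μ i) (hμpos i))
    positivity
  rcases le_or_gt (4 * a * (a + 1/2 * b)) 0 with hden | hden
  · exact le_trans (div_nonpos_of_nonneg_of_nonpos (sq_nonneg b) hden) hD0
  -- main case
  have hapos : 0 < a := by
    rcases ha0.lt_or_eq with h | h
    · exact h
    · exfalso; rw [← h] at hden; simp at hden
  have hθH : θ.IsHermitian := hθ.1
  set N := M - 1 with hNdef
  have hNH : N.IsHermitian := hMH.sub (Matrix.isHermitian_one)
  have hΔH : Δ.IsHermitian := hϑ.1.sub hθ.1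
  have hΔRNR : Δ = R * N * R := by
    rw [hΔdef, hNdef, ← hϑM, ← hRR]; noncomm_ring
  have hbsq : b^2 = (Δ * Δ).trace := by
    rw [hbdef, frob_sq, aux_trace_mul_self_eq_sum_sq hΔH]
  have hΔΔ : (Δ * Δ).trace = (θ * (N * θ * N)).trace := by
    rw [hΔRNR]
    have h : (R * N * R) * (R * N * R) = R * (N * θ * N) * R := by
      rw [← hRR]; noncomm_ring
    rw [h, Matrix.trace_mul_cycle R (N * θ * N) R, hRR]
  have hNθN_psd : (N * θ * N).PosSemidef := by
    have h := hθps.conjTranspose_mul_mul_same N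
    rwa [hNH] at h
  have hNN_psd : (N * N).PosSemidef := by
    have h := Matrix.posSemidef_conjTranspose_mul_self N
    rwa [hNH] at h
  have haIθ : ((a • (1 : Matrix (Fin p) (Fin p) ℝ)) - θ).PosSemidef := by
    refine Matrix.PosSemidef.of_dotProduct_mulVec_nonneg ?_ ?_
    · have h1 : ((a • (1 : Matrix (Fin p) (Fin p) ℝ))).IsHermitian := by
        unfold Matrix.IsHermitian
        rw [Matrix.conjTranspose_smul, Matrix.conjTranspose_one, star_trivial]
      exact h1.sub hθH
    · intro x
      have hsx : star x = x := funext fun i => star_trivial _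
      rw [hsx, Matrix.sub_mulVec, Matrix.smul_mulVec, Matrix.one_mulVec,
        dotProduct_sub, dotProduct_smul]
      have hq := quad_le_specNorm θ x
      have hdx : x ⬝ᵥ x = ∑ i, (x i)^2 := by
        unfold dotProduct; apply Finset.sum_congr rfl; intro i _; ring
      rw [smul_eq_mul, hdx]
      linarith [hq]
  have hmulle : ∀ P : Matrix (Fin p) (Fin p) ℝ, P.PosSemidef →
      (θ * P).trace ≤ a * P.trace := by
    intro P hP
    have h0 := trace_mul_nonneg_of_psd haIθ hP
    have hexp : (((a • (1 : Matrix (Fin p) (Fin p) ℝ)) - θ) * P).trace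
        = a * P.trace - (θ * P).trace := by
      rw [Matrix.sub_mul, Matrix.trace_sub]
      congr 1
      rw [smul_mul_assoc, Matrix.one_mul, Matrix.trace_smul, smul_eq_mul]
    rw [hexp] at h0
    linarith
  set t := ∑ i, (μ i - 1)^2 with htdef
  have hNNt : (N * N).trace = t := by
    have h1 : N * N = M * M - M - M + 1 := by rw [hNdef]; noncomm_ring
    rw [h1, Matrix.trace_add, Matrix.trace_sub, Matrix.trace_sub,
      trace_sq_eq_sum_eig_sq hMH, trace_eq_sum_eig hMH, Matrix.trace_one, htdef]
    have h2 : ∑ i, (μ i - 1)^2 = ∑ i, ((μ i)^2 - μ i - μ i + 1) := by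
      apply Finset.sum_congr rfl; intro i _; ring
    rw [h2]
    simp [Finset.sum_add_distrib, Finset.sum_sub_distrib, Finset.card_univ, hμdef]
  have hchain : b^2 ≤ a^2 * t := by
    have e1 : (θ * (N * θ * N)).trace ≤ a * (N * θ * N).trace := hmulle _ hNθN_psd
    have e2 : (N * θ * N).trace = (θ * (N * N)).trace := by
      rw [Matrix.trace_mul_cycle, Matrix.trace_mul_comm]
    have e3 : (θ * (N * N)).trace ≤ a * (N * N).trace := hmulle _ hNN_psd
    calc b^2 = (θ * (N * θ * N)).trace := by rw [hbsq, hΔΔ]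
      _ ≤ a * (N * θ * N).trace := e1
      _ = a * (θ * (N * N)).trace := by rw [e2]
      _ ≤ a * (a * (N * N).trace) := mul_le_mul_of_nonneg_left e3 ha0
      _ = a^2 * t := by rw [hNNt]; ring
  have ht0 : 0 ≤ t := by positivity
  set d := Real.sqrt t with hddef
  have hd0 : 0 ≤ d := Real.sqrt_nonneg t
  have hd2 : d^2 = t := Real.sq_sqrt ht0
  have habs : ∀ i, |μ i - 1| ≤ d := by
    intro i
    rw [hddef, ← Real.sqrt_sq_eq_abs]
    exact Real.sqrt_le_sqrt (Finset.single_le_sum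
      (f := fun j => (μ j - 1)^2) (fun j _ => sq_nonneg _) (Finset.mem_univ i))
  have hDlow : t / (2 * (2 + d)) ≤ ∑ i, (μ i - 1 - Real.log (μ i)) := by
    rw [htdef, Finset.sum_div]
    apply Finset.sum_le_sum
    intro i _
    refine le_trans ?_ (scalar_ineq (μ i) (hμpos i))
    have h := habs i
    gcongr
    all_goals first | positivity | exact abs_nonneg _ | exact h
  exact le_trans (aux_final hapos hb0 hd0 hd2 hchain hden) hDlow


end SCHelpers

/-- Lemma 2 part 1, second half: strong-convexity-type lower bound for
`g(θ) = -log det θ + Tr(θS)` on all of `M_p⁺`, in terms of the spectral norm of `θ`. -/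
theorem logdet_strong_convexity_lower_bound
    (p : ℕ) (S : Matrix (Fin p) (Fin p) ℝ) (hS : S.IsSymm)
    (θ ϑ : Matrix (Fin p) (Fin p) ℝ) (hθ : θ.PosDef) (hϑ : ϑ.PosDef) :
    (frob (ϑ - θ))^2 /
        (4 * specNorm θ * (specNorm θ + (1/2) * frob (ϑ - θ))) ≤
      gdet S ϑ - gdet S θ - ((S - θ⁻¹) * (ϑ - θ)).trace :=
  aux_main S θ ϑ hθ hϑ

end
end

section
/- Taylor expansion identity for log-det: let θ₀, θ₁ be real symmetric positive definite p×p matrices and H = θ₁ − θ₀ (so θ₀ + tH is positive definite for all t ∈ [0,1]). Then −log det θ₁ + log det θ₀ + Tr(θ₀⁻¹ H) = ∫₀¹ Tr(θ₀⁻¹ H (θ₀ + tH)⁻¹ H) · t dt. -/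
open Matrix Finset MeasureTheory ProbabilityTheory Filter

noncomputable section

section AuxLogDetTaylor

lemma sum_det_updateRow_eq' {p : ℕ} (A B : Matrix (Fin p) (Fin p) ℝ) (hA : IsUnit A.det) :
    ∑ i, ((A.updateRow i (B i)).det) = A.det * (A⁻¹ * B).trace := by
  have hrow : ∀ i : Fin p, B i = ∑ k, (B * A⁻¹) i k • A k := by
    intro i
    have h : B = (B * A⁻¹) * A := by
      rw [Matrix.mul_assoc, Matrix.nonsing_inv_mul A hA, Matrix.mul_one]
    conv_lhs => rw [h]
    ext j
    simp [Matrix.mul_apply]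
  have : ∀ i : Fin p, (A.updateRow i (B i)).det = (B * A⁻¹) i i * A.det := by
    intro i
    rw [hrow i, Matrix.det_updateRow_sum]
    simp
  rw [Finset.sum_congr rfl fun i _ => this i, ← Finset.sum_mul, mul_comm]
  congr 1
  rw [Matrix.trace_mul_comm]
  rfl

lemma hasDerivAt_det_affine' {p : ℕ} (A B : Matrix (Fin p) (Fin p) ℝ) (t : ℝ) :
    HasDerivAt (fun s : ℝ => (A + s • B).det)
      (∑ i, (((A + t • B).updateRow i (B i)).det)) t := by
  classical
  set f : MultilinearMap ℝ (fun _ : Fin p => (Fin p → ℝ)) ℝ :=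
    (Matrix.detRowAlternating : (Fin p → ℝ) [⋀^Fin p]→ₗ[ℝ] ℝ).toMultilinearMap with hf
  set X : Matrix (Fin p) (Fin p) ℝ := A + t • B with hX
  set D : ℝ := ∑ i, ((X.updateRow i (B i)).det) with hD
  have key : ∀ s : ℝ, (A + (t + s) • B).det =
      X.det + s * D +
        ∑ S ∈ Finset.univ.filter (fun S : Finset (Fin p) => 2 ≤ S.card),
          s ^ S.card * f (S.piecewise B X) := by
    intro s
    have h1 : A + (t + s) • B = X + s • B := by
      rw [hX]; module
    rw [h1]
    have h2 : (X + s • B).det = f ((X : Fin p → Fin p → ℝ) + (s • B : Matrix _ _ ℝ)) := rfl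
    rw [h2]
    erw [f.map_add_eq_map_add_linearDeriv_add]
    have hlin : (f.linearDeriv (X : Fin p → Fin p → ℝ)) ((s • B : Matrix _ _ ℝ) : Fin p → Fin p → ℝ) = s * D := by
      erw [f.linearDeriv_apply]
      rw [hD, Finset.mul_sum]
      refine Finset.sum_congr rfl fun i _ => ?_
      show (X.updateRow i (s • B i)).det = s * (X.updateRow i (B i)).det
      rw [Matrix.det_updateRow_smul]
    rw [hlin]
    congr 1
    refine Finset.sum_congr rfl fun S _ => ?_
    have hP : S.piecewise ((s • B : Matrix _ _ ℝ) : Fin p → Fin p → ℝ) (X : Fin p → Fin p → ℝ)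
        = S.piecewise (fun i => s • (S.piecewise (B : Fin p → Fin p → ℝ) X) i)
            (S.piecewise (B : Fin p → Fin p → ℝ) X) := by
      ext i j
      by_cases hi : i ∈ S <;> simp [Finset.piecewise, hi]
    show f (S.piecewise ((s • B : Matrix _ _ ℝ) : Fin p → Fin p → ℝ) (X : Fin p → Fin p → ℝ)) = _
    rw [hP, f.map_piecewise_smul]
    simp [Finset.prod_const, smul_eq_mul]
  have hpoly : HasDerivAt (fun s : ℝ => X.det + s * D +
      ∑ S ∈ Finset.univ.filter (fun S : Finset (Fin p) => 2 ≤ S.card),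
        s ^ S.card * f (S.piecewise B X)) D 0 := by
    have h1 : HasDerivAt (fun s : ℝ => X.det + s * D) D 0 := by
      simpa using (hasDerivAt_const (0:ℝ) X.det).fun_add ((hasDerivAt_id (0:ℝ)).mul_const D)
    have h2 : HasDerivAt (fun s : ℝ =>
        ∑ S ∈ Finset.univ.filter (fun S : Finset (Fin p) => 2 ≤ S.card),
          s ^ S.card * f (S.piecewise B X)) 0 0 := by
      have := HasDerivAt.fun_sum (u := Finset.univ.filter (fun S : Finset (Fin p) => 2 ≤ S.card))
        (fun S hS => ((hasDerivAt_pow S.card (0:ℝ)).mul_const (f (S.piecewise B X))))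
      refine this.congr_deriv ?_
      rw [eq_comm, Finset.sum_eq_zero]
      intro S hS
      have h2le : 2 ≤ S.card := (Finset.mem_filter.mp hS).2
      have : (0:ℝ) ^ (S.card - 1) = 0 := by
        apply zero_pow; omega
      rw [this]; ring
    simpa using h1.fun_add h2
  have hshift : HasDerivAt (fun s : ℝ => (A + (t + s) • B).det) D 0 := by
    apply HasDerivAt.congr_of_eventuallyEq hpoly
    filter_upwards with s using key s
  have hshift' : HasDerivAt (fun s : ℝ => (A + (t + s) • B).det) D (t - t) := by
    rw [sub_self]; exact hshift
  have hfin := hshift'.comp_sub_const t t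
  simpa using hfin

lemma posDef_smul' {p : ℕ} {M : Matrix (Fin p) (Fin p) ℝ} (hM : M.PosDef) {c : ℝ} (hc : 0 < c) :
    (c • M).PosDef := by
  refine posDef_iff_dotProduct_mulVec.mpr ⟨?_, fun x hx => ?_⟩
  · show (c • M)ᴴ = c • M
    rw [conjTranspose_smul, hM.1]
    simp
  · rw [smul_mulVec, dotProduct_smul]
    exact mul_pos hc (hM.dotProduct_mulVec_pos hx)

lemma posSemidef_smul' {p : ℕ} {M : Matrix (Fin p) (Fin p) ℝ} (hM : M.PosDef) {c : ℝ} (hc : 0 ≤ c) :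
    (c • M).PosSemidef := by
  refine posSemidef_iff_dotProduct_mulVec.mpr ⟨?_, fun x => ?_⟩
  · show (c • M)ᴴ = c • M
    rw [conjTranspose_smul, hM.1]
    simp
  · rw [smul_mulVec, dotProduct_smul]
    rcases eq_or_ne x 0 with rfl | hx
    · simp
    · exact mul_nonneg hc (hM.dotProduct_mulVec_pos hx).le

lemma segment_posDef' {p : ℕ} {θ0 θ1 : Matrix (Fin p) (Fin p) ℝ} (h0 : θ0.PosDef)
    (h1 : θ1.PosDef) {t : ℝ} (ht : t ∈ Set.Icc (0:ℝ) 1) : (θ0 + t • (θ1 - θ0)).PosDef := by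
  rcases eq_or_lt_of_le ht.2 with rfl | htlt
  · have : θ0 + (1:ℝ) • (θ1 - θ0) = θ1 := by module
    rw [this]; exact h1
  · have hrw : θ0 + t • (θ1 - θ0) = (1 - t) • θ0 + t • θ1 := by module
    rw [hrw]
    exact (posDef_smul' h0 (by linarith)).add_posSemidef (posSemidef_smul' h1 ht.1)

end AuxLogDetTaylor

/-- Taylor expansion identity for `log det` at `θ₀`, with `H = θ₁ - θ₀`:
`-log det θ₁ + log det θ₀ + Tr(θ₀⁻¹H) = ∫₀¹ Tr(θ₀⁻¹ H (θ₀ + tH)⁻¹ H) t dt`. -/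
theorem logdet_taylor_remainder_integral
    (p : ℕ) (θ0 θ1 : Matrix (Fin p) (Fin p) ℝ) (h0 : θ0.PosDef) (h1 : θ1.PosDef) :
    -Real.log θ1.det + Real.log θ0.det + (θ0⁻¹ * (θ1 - θ0)).trace =
      ∫ t in (0:ℝ)..1,
        (θ0⁻¹ * (θ1 - θ0) * (θ0 + t • (θ1 - θ0))⁻¹ * (θ1 - θ0)).trace * t := by
  set H : Matrix (Fin p) (Fin p) ℝ := θ1 - θ0 with hH
  have huIcc : Set.uIcc (0:ℝ) 1 = Set.Icc (0:ℝ) 1 := Set.uIcc_of_le zero_le_one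
  have hpos : ∀ t ∈ Set.Icc (0:ℝ) 1, (θ0 + t • H).PosDef :=
    fun t ht => segment_posDef' h0 h1 ht
  have hdet : ∀ t ∈ Set.Icc (0:ℝ) 1, (θ0 + t • H).det ≠ 0 :=
    fun t ht => (hpos t ht).det_pos.ne'
  set φ : ℝ → ℝ := fun t => -Real.log (θ0 + t • H).det + t * (θ0⁻¹ * H).trace with hφ
  set ψ : ℝ → ℝ := fun t => (θ0⁻¹ * H * (θ0 + t • H)⁻¹ * H).trace * t with hψ
  have hderiv : ∀ t ∈ Set.uIcc (0:ℝ) 1, HasDerivAt φ (ψ t) t := by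
    intro t ht
    rw [huIcc] at ht
    set A : Matrix (Fin p) (Fin p) ℝ := θ0 + t • H with hA
    have hAunit : IsUnit A.det := (hdet t ht).isUnit
    have h0unit : IsUnit θ0.det := h0.det_pos.ne'.isUnit
    have d1 : HasDerivAt (fun s : ℝ => (θ0 + s • H).det) (A.det * (A⁻¹ * H).trace) t := by
      have := hasDerivAt_det_affine' θ0 H t
      rwa [sum_det_updateRow_eq' _ _ hAunit] at this
    have d2 : HasDerivAt (fun s : ℝ => Real.log (θ0 + s • H).det)
        ((A.det)⁻¹ * (A.det * (A⁻¹ * H).trace)) t :=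
      by have := (Real.hasDerivAt_log (hdet t ht)).comp t d1; exact this
    have d3 : HasDerivAt φ (-((A.det)⁻¹ * (A.det * (A⁻¹ * H).trace)) + (θ0⁻¹ * H).trace) t :=
      d2.neg.add (hasDerivAt_mul_const _)
    convert d3 using 1
    have hsimp : (A.det)⁻¹ * (A.det * (A⁻¹ * H).trace) = (A⁻¹ * H).trace := by
      rw [← mul_assoc, inv_mul_cancel₀ (hdet t ht), one_mul]
    rw [hsimp]
    have hres : θ0⁻¹ - A⁻¹ = t • (θ0⁻¹ * H * A⁻¹) := by
      have h1' : θ0⁻¹ * (A - θ0) * A⁻¹ = θ0⁻¹ - A⁻¹ := by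
        rw [Matrix.mul_sub, Matrix.sub_mul, Matrix.mul_assoc,
          Matrix.mul_nonsing_inv _ hAunit, Matrix.nonsing_inv_mul _ h0unit,
          Matrix.mul_one, Matrix.one_mul]
      have h2' : A - θ0 = t • H := by rw [hA]; abel
      rw [← h1', h2']
      rw [Matrix.mul_smul, Matrix.smul_mul]
    have : ψ t = ((θ0⁻¹ - A⁻¹) * H).trace := by
      rw [hres, Matrix.smul_mul, Matrix.trace_smul, hψ]
      simp [mul_comm, hA]
    rw [this, Matrix.sub_mul, Matrix.trace_sub]
    ring
  have hcontA : Continuous (fun t : ℝ => θ0 + t • H) :=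
    continuous_const.add (continuous_id.smul continuous_const)
  have hcontInv : ContinuousOn (fun t : ℝ => (θ0 + t • H)⁻¹) (Set.uIcc (0:ℝ) 1) := by
    rw [huIcc]
    have : ∀ t ∈ Set.Icc (0:ℝ) 1, (θ0 + t • H)⁻¹
        = ((θ0 + t • H).det)⁻¹ • (θ0 + t • H).adjugate := by
      intro t ht; rw [Matrix.inv_def, Ring.inverse_eq_inv']
    refine ContinuousOn.congr ?_ this
    exact (hcontA.matrix_det.continuousOn.inv₀ hdet).smul
      hcontA.matrix_adjugate.continuousOn
  have hcontψ : ContinuousOn ψ (Set.uIcc (0:ℝ) 1) := by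
    have hF : Continuous (fun M : Matrix (Fin p) (Fin p) ℝ => (θ0⁻¹ * H * M * H).trace) :=
      ((continuous_const.matrix_mul continuous_id).matrix_mul continuous_const).matrix_trace
    exact (hF.comp_continuousOn hcontInv).mul continuousOn_id
  have hint : IntervalIntegrable ψ volume 0 1 := hcontψ.intervalIntegrable
  have hftc := intervalIntegral.integral_eq_sub_of_hasDerivAt hderiv hint
  have e1 : θ0 + (1:ℝ) • H = θ1 := by rw [hH]; module
  have e0 : θ0 + (0:ℝ) • H = θ0 := by rw [hH]; module
  have hφ1 : φ 1 = -Real.log θ1.det + (θ0⁻¹ * H).trace := by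
    have e1' : θ0 + H = θ1 := by rw [hH]; abel
    rw [hφ]; simp [e1, e1']
  have hφ0 : φ 0 = -Real.log θ0.det := by
    rw [hφ]; simp [e0]
  rw [hftc, hφ1, hφ0]
  ring

end
end

section
/- Eigenvalue shift bound for the elastic-net proximal map of a symmetric matrix: fix α ∈ [0,1) and γ > 0, and let M be a real symmetric p×p matrix. Then λ_min(Prox_γ(M)) ≥ (λ_min(M) − αγp)/(1 + (1−α)γ) and λ_max(Prox_γ(M)) ≤ (λ_max(M) + αγp)/(1 + (1−α)γ). -/
open Matrix Finset MeasureTheory ProbabilityTheory Filter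

noncomputable section

lemma eig_iff' {p : ℕ} (A : Matrix (Fin p) (Fin p) ℝ) (r : ℝ) :
    Module.End.HasEigenvalue (Matrix.toLin' A) r ↔
      ∃ v : Fin p → ℝ, v ≠ 0 ∧ A.mulVec v = r • v := by
  rw [Module.End.hasEigenvalue_iff, Submodule.ne_bot_iff]
  constructor
  · rintro ⟨v, hv, h0⟩
    exact ⟨v, h0, by simpa [Module.End.mem_eigenspace_iff, Matrix.toLin'_apply] using hv⟩
  · rintro ⟨v, h0, hv⟩
    exact ⟨v, by simpa [Module.End.mem_eigenspace_iff, Matrix.toLin'_apply] using hv, h0⟩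

lemma spec_aux {p : ℕ} (hp : 0 < p) {A : Matrix (Fin p) (Fin p) ℝ} (hA : A.IsSymm) :
    (∃ r : ℝ, Module.End.HasEigenvalue (Matrix.toLin' A) r) ∧
    ∀ v : Fin p → ℝ,
      lamMin A * (∑ i, v i ^ 2) ≤ v ⬝ᵥ A.mulVec v ∧
      v ⬝ᵥ A.mulVec v ≤ lamMax A * (∑ i, v i ^ 2) := by
  haveI : Nonempty (Fin p) := ⟨⟨0, hp⟩⟩
  have hH : A.IsHermitian := by
    rw [Matrix.IsHermitian, Matrix.conjTranspose_eq_transpose_of_trivial]; exact hA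
  set b := hH.eigenvectorBasis with hb
  set ev := hH.eigenvalues with hev
  set μ := Finset.univ.inf' Finset.univ_nonempty ev with hμ
  set ν := Finset.univ.sup' Finset.univ_nonempty ev with hν
  -- dot product vs inner
  have hdot : ∀ x y : EuclideanSpace ℝ (Fin p), (⇑x : Fin p → ℝ) ⬝ᵥ ⇑y = inner ℝ x y := by
    intro x y
    simp [dotProduct, PiLp.inner_apply, RCLike.inner_apply, mul_comm]
  -- expansion
  have expand : ∀ v : Fin p → ℝ,
      (∑ i, v i ^ 2) = (∑ i, ((⇑(b i) : Fin p → ℝ) ⬝ᵥ v) ^ 2) ∧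
      v ⬝ᵥ A.mulVec v = ∑ i, ev i * ((⇑(b i) : Fin p → ℝ) ⬝ᵥ v) ^ 2 := by
    intro v
    set vE : EuclideanSpace ℝ (Fin p) := WithLp.toLp 2 v with hvE
    set wE : EuclideanSpace ℝ (Fin p) := WithLp.toLp 2 (A.mulVec v) with hwE
    have hrepr : ∀ i, b.repr vE i = (⇑(b i) : Fin p → ℝ) ⬝ᵥ v := by
      intro i
      rw [b.repr_apply_apply, ← hdot]
    have hreprw : ∀ i, b.repr wE i = ev i * ((⇑(b i) : Fin p → ℝ) ⬝ᵥ v) := by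
      intro i
      rw [b.repr_apply_apply, ← hdot]
      show (⇑(b i) : Fin p → ℝ) ⬝ᵥ A.mulVec v = _
      rw [Matrix.dotProduct_mulVec, ← Matrix.mulVec_transpose, hA,
        hH.mulVec_eigenvectorBasis]
      simp [smul_dotProduct, smul_eq_mul]
      rfl
    constructor
    · calc (∑ i, v i ^ 2) = (inner ℝ vE vE : ℝ) := by
            simp only [PiLp.inner_apply, RCLike.inner_apply, conj_trivial]
            exact Finset.sum_congr rfl fun i _ => (sq (v i)).symm ▸ rfl
        _ = (inner ℝ (b.repr vE) (b.repr vE) : ℝ) := by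
            rw [LinearIsometryEquiv.inner_map_map]
        _ = ∑ i, ((⇑(b i) : Fin p → ℝ) ⬝ᵥ v) ^ 2 := by
            simp only [PiLp.inner_apply, RCLike.inner_apply, conj_trivial, hrepr]
            exact Finset.sum_congr rfl fun i _ => (sq _).symm
    · calc v ⬝ᵥ A.mulVec v = (inner ℝ vE wE : ℝ) := by rw [← hdot]
        _ = (inner ℝ (b.repr vE) (b.repr wE) : ℝ) := by
            rw [LinearIsometryEquiv.inner_map_map]
        _ = ∑ i, ev i * ((⇑(b i) : Fin p → ℝ) ⬝ᵥ v) ^ 2 := by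
            simp only [PiLp.inner_apply, RCLike.inner_apply, conj_trivial, hrepr, hreprw]
            exact Finset.sum_congr rfl fun i _ => by ring
  -- Rayleigh bounds with μ, ν
  have hray : ∀ v : Fin p → ℝ,
      μ * (∑ i, v i ^ 2) ≤ v ⬝ᵥ A.mulVec v ∧ v ⬝ᵥ A.mulVec v ≤ ν * (∑ i, v i ^ 2) := by
    intro v
    obtain ⟨h1, h2⟩ := expand v
    rw [h1, h2, Finset.mul_sum, Finset.mul_sum]
    constructor
    · exact Finset.sum_le_sum fun i _ =>
        mul_le_mul_of_nonneg_right (Finset.inf'_le _ (Finset.mem_univ i)) (sq_nonneg _)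
    · exact Finset.sum_le_sum fun i _ =>
        mul_le_mul_of_nonneg_right (Finset.le_sup' _ (Finset.mem_univ i)) (sq_nonneg _)
  -- eigenvalues ev i are eigenvalues
  have hmem : ∀ i, Module.End.HasEigenvalue (Matrix.toLin' A) (ev i) := by
    intro i
    rw [eig_iff']
    refine ⟨⇑(b i), ?_, hH.mulVec_eigenvectorBasis i⟩
    intro h
    apply b.orthonormal.ne_zero i
    ext k
    exact congrFun h k
  -- every eigenvalue is in [μ, ν]
  have hbound : ∀ r : ℝ, Module.End.HasEigenvalue (Matrix.toLin' A) r → μ ≤ r ∧ r ≤ ν := by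
    intro r hr
    obtain ⟨v, h0, hv⟩ := (eig_iff' A r).mp hr
    have hS : 0 < ∑ i, v i ^ 2 := by
      obtain ⟨i, hi⟩ := Function.ne_iff.mp h0
      exact Finset.sum_pos' (fun j _ => sq_nonneg _)
        ⟨i, Finset.mem_univ i, by have := abs_pos.mpr hi; nlinarith [sq_abs (v i)]⟩
    have hd : v ⬝ᵥ A.mulVec v = r * ∑ i, v i ^ 2 := by
      rw [hv]
      simp [dotProduct, smul_eq_mul, Finset.mul_sum, sq]
      exact Finset.sum_congr rfl fun i _ => by ring
    obtain ⟨hl, hu⟩ := hray v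
    rw [hd] at hl hu
    exact ⟨le_of_mul_le_mul_right hl hS, le_of_mul_le_mul_right hu hS⟩
  obtain ⟨i, -, hi⟩ := Finset.exists_mem_eq_inf' Finset.univ_nonempty ev
  obtain ⟨j, -, hj⟩ := Finset.exists_mem_eq_sup' Finset.univ_nonempty ev
  have hμmem : Module.End.HasEigenvalue (Matrix.toLin' A) μ := hμ ▸ hi ▸ hmem i
  have hνmem : Module.End.HasEigenvalue (Matrix.toLin' A) ν := hν ▸ hj ▸ hmem j
  have hminEq : lamMin A = μ := by
    apply le_antisymm
    · exact csInf_le ⟨μ, fun r hr => (hbound r hr).1⟩ hμmem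
    · exact le_csInf ⟨μ, hμmem⟩ fun r hr => (hbound r hr).1
  have hmaxEq : lamMax A = ν := by
    apply le_antisymm
    · exact csSup_le ⟨μ, hμmem⟩ fun r hr => (hbound r hr).2
    · exact le_csSup ⟨ν, fun r hr => (hbound r hr).2⟩ hνmem
  rw [hminEq, hmaxEq]
  exact ⟨⟨μ, hμmem⟩, hray⟩

/-- eigenvalue shift bounds for the elastic-net proximal map of a
symmetric matrix. -/
theorem prox_eigenvalue_shift_bounds
    (p : ℕ) (α γ : ℝ) (hα0 : 0 ≤ α) (hα1 : α < 1) (hγ : 0 < γ)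
    (M : Matrix (Fin p) (Fin p) ℝ) (hM : M.IsSymm) :
    (lamMin M - α*γ*(p : ℝ))/(1+(1-α)*γ) ≤ lamMin (proxMat α γ M) ∧
    lamMax (proxMat α γ M) ≤ (lamMax M + α*γ*(p : ℝ))/(1+(1-α)*γ) := by
  have hαγ : 0 ≤ α * γ := mul_nonneg hα0 hγ.le
  set c := 1 + (1-α)*γ with hcdef
  have hc : 0 < c := by nlinarith
  rcases Nat.eq_zero_or_pos p with hp | hp
  · subst hp
    have hempty : ∀ A : Matrix (Fin 0) (Fin 0) ℝ,
        {r : ℝ | Module.End.HasEigenvalue (Matrix.toLin' A) r} = ∅ := by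
      intro A; ext r
      simp only [Set.mem_setOf_eq, Set.mem_empty_iff_false, iff_false]
      intro h
      obtain ⟨v, h0, -⟩ := (eig_iff' A r).mp h
      exact h0 (Subsingleton.elim _ _)
    have h1 : lamMin M = 0 := by rw [lamMin, hempty, Real.sInf_empty]
    have h2 : lamMax M = 0 := by rw [lamMax, hempty, Real.sSup_empty]
    have h3 : lamMin (proxMat α γ M) = 0 := by rw [lamMin, hempty, Real.sInf_empty]
    have h4 : lamMax (proxMat α γ M) = 0 := by rw [lamMax, hempty, Real.sSup_empty]
    rw [h1, h2, h3, h4]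
    norm_num
  · set N := proxMat α γ M with hN
    have hNs : N.IsSymm := by
      rw [Matrix.IsSymm]
      ext i j
      simp only [Matrix.transpose_apply, hN, proxMat, Matrix.of_apply, hM.apply i j]
    have hpt : ∀ i j, |c * N i j - M i j| ≤ α*γ := by
      intro i j
      simp only [hN, proxMat, Matrix.of_apply, ← hcdef]
      split_ifs with h1 h2
      · rw [mul_zero, zero_sub, abs_neg]
        exact le_of_lt h1
      · rw [mul_div_cancel₀ _ hc.ne', sub_sub_cancel_left, abs_neg, abs_of_nonneg hαγ]
      · rw [mul_div_cancel₀ _ hc.ne']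
        have : M i j + α*γ - M i j = α*γ := by ring
        rw [this, abs_of_nonneg hαγ]
    have key : ∀ r : ℝ, Module.End.HasEigenvalue (Matrix.toLin' N) r →
        (lamMin M - α*γ*(p:ℝ))/c ≤ r ∧ r ≤ (lamMax M + α*γ*(p:ℝ))/c := by
      intro r hr
      obtain ⟨v, h0, hv⟩ := (eig_iff' N r).mp hr
      set S := ∑ i, v i ^ 2 with hSdef
      have hS : 0 < S := by
        obtain ⟨i, hi⟩ := Function.ne_iff.mp h0
        exact Finset.sum_pos' (fun j _ => sq_nonneg _)
          ⟨i, Finset.mem_univ i, by have := abs_pos.mpr hi; nlinarith [sq_abs (v i)]⟩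
      have hd : v ⬝ᵥ N.mulVec v = r * S := by
        rw [hv]
        simp only [dotProduct, Pi.smul_apply, smul_eq_mul, hSdef, Finset.mul_sum]
        exact Finset.sum_congr rfl fun i _ => by ring
      have hdiff : |c * (v ⬝ᵥ N.mulVec v) - v ⬝ᵥ M.mulVec v| ≤ α*γ*((p:ℝ)*S) := by
        have h1 : c * (v ⬝ᵥ N.mulVec v) - v ⬝ᵥ M.mulVec v
            = ∑ i, (v i * (∑ j, (c * N i j - M i j) * v j)) := by
          rw [dotProduct, dotProduct, Finset.mul_sum, ← Finset.sum_sub_distrib]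
          refine Finset.sum_congr rfl fun i _ => ?_
          simp only [Matrix.mulVec, dotProduct, Finset.mul_sum,
            ← Finset.sum_sub_distrib]
          refine Finset.sum_congr rfl fun j _ => ?_
          ring
        rw [h1]
        calc |∑ i, (v i * (∑ j, (c * N i j - M i j) * v j))|
            ≤ ∑ i, |v i * (∑ j, (c * N i j - M i j) * v j)| :=
              Finset.abs_sum_le_sum_abs _ _
          _ ≤ ∑ i, |v i| * (α*γ * ∑ j, |v j|) := by
              refine Finset.sum_le_sum fun i _ => ?_
              rw [abs_mul]
              refine mul_le_mul_of_nonneg_left ?_ (abs_nonneg _)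
              calc |∑ j, (c * N i j - M i j) * v j|
                  ≤ ∑ j, |(c * N i j - M i j) * v j| := Finset.abs_sum_le_sum_abs _ _
                _ ≤ ∑ j, α*γ * |v j| := by
                    refine Finset.sum_le_sum fun j _ => ?_
                    rw [abs_mul]
                    exact mul_le_mul_of_nonneg_right (hpt i j) (abs_nonneg _)
                _ = α*γ * ∑ j, |v j| := by rw [Finset.mul_sum]
          _ = α*γ * (∑ i, |v i|)^2 := by rw [← Finset.sum_mul]; ring
          _ ≤ α*γ*((p:ℝ)*S) := by
              refine mul_le_mul_of_nonneg_left ?_ hαγ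
              have h2 := sq_sum_le_card_mul_sum_sq
                (s := Finset.univ) (f := fun i : Fin p => |v i|)
              simpa [sq_abs, hSdef] using h2
      obtain ⟨-, hrayM⟩ := spec_aux hp hM
      obtain ⟨hML, hMU⟩ := hrayM v
      rw [hd] at hdiff
      obtain ⟨ha1, ha2⟩ := abs_le.mp hdiff
      constructor
      · rw [div_le_iff₀ hc]
        have h2 : (lamMin M - α*γ*(p:ℝ)) * S ≤ r * c * S := by nlinarith
        exact le_of_mul_le_mul_right h2 hS
      · rw [le_div_iff₀ hc]
        have h2 : r * c * S ≤ (lamMax M + α*γ*(p:ℝ)) * S := by nlinarith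
        exact le_of_mul_le_mul_right h2 hS
    obtain ⟨⟨r0, hr0⟩, -⟩ := spec_aux hp hNs
    constructor
    · rw [lamMin]
      exact le_csInf ⟨r0, hr0⟩ fun r hr => (key r hr).1
    · rw [lamMax]
      exact csSup_le ⟨r0, hr0⟩ fun r hr => (key r hr).2

end
end
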